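/- arXiv:2506.01081 — 5 statements merged into one kernel-verified Lean document; each statement's English description precedes it below -/
import Mathlib

section
/- Let u_{k−m}, …, u_k ∈ ℝⁿ, set S_k = [u_{k−m+1}−u_{k−m}, …, u_k−u_{k−1}, q(u_k)−u_k] ∈ ℝ^{n×(m+1)}, and assume A S_k has full column rank. Let u_{k+1} be produced by a single NGMRES(m) step from u_{k−m}, …, u_k and set W_k = S_k (S_kᵀ Aᵀ A S_k)⁻¹ S_kᵀ Aᵀ. Then e_{k+1} = (I − W_k A) M e_k and r_{k+1} = (I − A W_k) M r_k. -/
open Matrix Polynomial Set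

noncomputable section

/-- Matrix–vector product, landing in Euclidean space. -/
def mulVecE {n : ℕ} (M : Matrix (Fin n) (Fin n) ℝ) (v : EuclideanSpace ℝ (Fin n)) :
    EuclideanSpace ℝ (Fin n) :=
  WithLp.toLp 2 (M.mulVec v)

/-- Residual `r(u) = A u - b`. -/
def res {n : ℕ} (A : Matrix (Fin n) (Fin n) ℝ) (b u : EuclideanSpace ℝ (Fin n)) :
    EuclideanSpace ℝ (Fin n) :=
  mulVecE A u - b

/-- Richardson fixed-point map `q(u) = (I - A) u + b = M u + b` with `M = I - A`. -/
def fp {n : ℕ} (A : Matrix (Fin n) (Fin n) ℝ) (b u : EuclideanSpace ℝ (Fin n)) :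
    EuclideanSpace ℝ (Fin n) :=
  mulVecE (1 - A) u + b

/-- The NGMRES(m) least-squares objective at step `k`:
`β ↦ ‖r(q(u_k)) + Σ_{i=0}^m β_i (r(q(u_k)) - r(u_{k-i}))‖`. -/
def ngObj {n : ℕ} (A : Matrix (Fin n) (Fin n) ℝ) (b : EuclideanSpace ℝ (Fin n))
    (m : ℕ) (prev : ℕ → EuclideanSpace ℝ (Fin n)) (k : ℕ) (β : Fin (m+1) → ℝ) : ℝ :=
  ‖res A b (fp A b (prev k)) +
    ∑ i : Fin (m+1), β i • (res A b (fp A b (prev k)) - res A b (prev (k - (i : ℕ))))‖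

/-- `next` is produced from `prev (k-m), …, prev k` by a single NGMRES(m) step:
`next = q(u_k) + Σ_{i=0}^m β_i (q(u_k) - u_{k-i})` where `β` minimizes the
least-squares objective `ngObj`. -/
def NGMRESStep {n : ℕ} (A : Matrix (Fin n) (Fin n) ℝ) (b : EuclideanSpace ℝ (Fin n))
    (m : ℕ) (prev : ℕ → EuclideanSpace ℝ (Fin n)) (k : ℕ)
    (next : EuclideanSpace ℝ (Fin n)) : Prop :=
  ∃ β : Fin (m+1) → ℝ,
    (∀ γ : Fin (m+1) → ℝ, ngObj A b m prev k β ≤ ngObj A b m prev k γ) ∧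
    next = fp A b (prev k) +
      ∑ i : Fin (m+1), β i • (fp A b (prev k) - prev (k - (i : ℕ)))

/-- The spectral (ℓ²-operator) norm of a matrix. -/
def opNorm {n : ℕ} (M : Matrix (Fin n) (Fin n) ℝ) : ℝ :=
  ‖(Matrix.toEuclideanCLM (𝕜 := ℝ) M : EuclideanSpace ℝ (Fin n) →L[ℝ] EuclideanSpace ℝ (Fin n))‖

/-- The 2-norm condition number `κ₂(U) = ‖U‖ ‖U⁻¹‖`. -/
def condNum {n : ℕ} (U : Matrix (Fin n) (Fin n) ℝ) : ℝ :=
  opNorm U * opNorm U⁻¹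

/-- `ε(a,b,s)`: minimum over real polynomials `p` of degree at most `s` with `p(1) = 1`
of `max_{t ∈ [1/b, 1/a]} |p(t)|`. -/
def eps (a b : ℝ) (s : ℕ) : ℝ :=
  sInf {t : ℝ | ∃ p : Polynomial ℝ, p.natDegree ≤ s ∧ p.eval 1 = 1 ∧
    t = sSup ((fun x => |p.eval x|) '' Set.Icc (1/b) (1/a))}

/-- `χ(s)`: minimum over real polynomials `p` of degree at most `s` with `p(1) = 1`
of `max_{λ ∈ Σ(M)} |p(λ)|`, where `Σ(M)` is the set of eigenvalues of `M`. -/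
def chiSp {n : ℕ} (M : Matrix (Fin n) (Fin n) ℝ) (s : ℕ) : ℝ :=
  sInf {t : ℝ | ∃ p : Polynomial ℝ, p.natDegree ≤ s ∧ p.eval 1 = 1 ∧
    t = sSup ((fun x => |p.eval x|) '' spectrum ℝ M)}

/-- The Krylov subspace `K_k(A, r) = span{r, Ar, …, A^{k-1} r}`. -/
def Krylov {n : ℕ} (A : Matrix (Fin n) (Fin n) ℝ) (r : EuclideanSpace ℝ (Fin n)) (k : ℕ) :
    Submodule ℝ (EuclideanSpace ℝ (Fin n)) :=
  Submodule.span ℝ (Set.range fun i : Fin k => mulVecE (A ^ (i : ℕ)) r)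

/-- The matrix `S_k = [u_{k-m+1}-u_{k-m}, …, u_k-u_{k-1}, q(u_k)-u_k] ∈ ℝ^{n×(m+1)}`. -/
def Smat {n : ℕ} (A : Matrix (Fin n) (Fin n) ℝ) (b : EuclideanSpace ℝ (Fin n))
    (prev : ℕ → EuclideanSpace ℝ (Fin n)) (k m : ℕ) :
    Matrix (Fin n) (Fin (m+1)) ℝ :=
  Matrix.of fun r c =>
    if (c : ℕ) < m then prev (k - m + c + 1) r - prev (k - m + c) r
    else fp A b (prev k) r - prev k r

/-- `u` is the sequence of aNGMRES(m, p) iterates (with `m = ⊤` giving aNGMRES(∞, p)):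
if `p ∤ k` then `u_k = q(u_{k-1})`, and if `p ∣ k` then `u_k` is produced by one
NGMRES(min(m, k-1)) step from `u_{k-1-m_k}, …, u_{k-1}`. -/
def aNGMRES {n : ℕ} (A : Matrix (Fin n) (Fin n) ℝ) (b : EuclideanSpace ℝ (Fin n))
    (m : ℕ∞) (p : ℕ) (u : ℕ → EuclideanSpace ℝ (Fin n)) : Prop :=
  ∀ k, 1 ≤ k →
    (¬ p ∣ k → u k = fp A b (u (k-1))) ∧
    (p ∣ k → NGMRESStep A b (min m ((k : ℕ∞) - 1)).toNat u (k-1) (u k))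

/-- error and residual propagation of a single NGMRES(m) step,
`e_{k+1} = (I - W_k A) M e_k` and `r_{k+1} = (I - A W_k) M r_k` with
`W_k = S_k (S_kᵀ Aᵀ A S_k)⁻¹ S_kᵀ Aᵀ`. -/
lemma min_inner_eq_zero {E : Type*} [NormedAddCommGroup E] [InnerProductSpace ℝ E]
    (z w : E) (h : ∀ t : ℝ, ‖z‖ ≤ ‖z + t • w‖) : (inner ℝ z w : ℝ) = 0 := by
  by_contra hc
  have hw : w ≠ 0 := by rintro rfl; simp at hc
  have hwp : 0 < ‖w‖ := norm_pos_iff.mpr hw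
  have hw2 : (0:ℝ) < ‖w‖^2 := by positivity
  set c : ℝ := inner ℝ z w with hcdef
  set t : ℝ := -c / ‖w‖^2 with htdef
  have hexp : ‖z + t • w‖^2 = ‖z‖^2 - c^2/‖w‖^2 := by
    rw [@norm_add_sq_real, real_inner_smul_right, norm_smul, mul_pow, Real.norm_eq_abs, sq_abs]
    rw [htdef]
    field_simp
    ring
  have h2 : ‖z‖^2 ≤ ‖z + t • w‖^2 := by
    have := h t
    nlinarith [norm_nonneg z]
  rw [hexp] at h2
  have hcp : 0 < c^2 := by positivity
  have := div_pos hcp hw2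
  linarith

lemma sum_smul_mulVec {n m' : ℕ} (M : Matrix (Fin n) (Fin m') ℝ) (β : Fin m' → ℝ)
    (f : Fin m' → Fin m' → ℝ) :
    ∑ i, β i • M.mulVec (f i) = M.mulVec (fun c => ∑ i, β i * f i c) := by
  have h1 : (fun c => ∑ i, β i * f i c) = ∑ i, β i • f i := by
    funext c
    simp [Finset.sum_apply]
  rw [h1, ← Matrix.mulVecLin_apply, map_sum]
  exact Finset.sum_congr rfl fun i _ => by rw [LinearMap.map_smul, Matrix.mulVecLin_apply]

/-- aux end -/
theorem stmt_1 {n m k : ℕ} (A : Matrix (Fin n) (Fin n) ℝ) (hA : IsUnit A)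
    (b ustar : EuclideanSpace ℝ (Fin n)) (hustar : mulVecE A ustar = b)
    (prev : ℕ → EuclideanSpace ℝ (Fin n)) (hmk : m ≤ k)
    (hrank : (A * Smat A b prev k m).rank = m + 1)
    (next : EuclideanSpace ℝ (Fin n)) (hstep : NGMRESStep A b m prev k next) :
    next - ustar =
      mulVecE ((1 - (Smat A b prev k m * ((Smat A b prev k m)ᵀ * Aᵀ * A * Smat A b prev k m)⁻¹ *
        (Smat A b prev k m)ᵀ * Aᵀ) * A) * (1 - A)) (prev k - ustar) ∧
    res A b next =
      mulVecE ((1 - A * (Smat A b prev k m * ((Smat A b prev k m)ᵀ * Aᵀ * A * Smat A b prev k m)⁻¹ *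
        (Smat A b prev k m)ᵀ * Aᵀ)) * (1 - A)) (res A b (prev k)) := by
  classical
  obtain ⟨β, hmin, hnext⟩ := hstep
  set S : Matrix (Fin n) (Fin (m+1)) ℝ := Smat A b prev k m with hSdef
  set q : Fin n → ℝ := (fp A b (prev k)).ofLp with hqdef
  have hSapp : ∀ (r : Fin n) (c : Fin (m+1)), S r c =
      if (c : ℕ) < m then prev (k - m + c + 1) r - prev (k - m + c) r
      else q r - prev k r := fun r c => rfl
  set ind : ℕ → Fin (m+1) → ℝ := fun i c => if m ≤ (c:ℕ) + i then 1 else 0 with hinddef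
  -- telescoping
  have hcol : ∀ i : ℕ, i ≤ m → S.mulVec (ind i) = fun r => q r - prev (k - i) r := by
    intro i
    induction i with
    | zero =>
      intro _
      funext r
      show ∑ c : Fin (m+1), S r c * ind 0 c = _
      rw [Finset.sum_eq_single (Fin.last m)]
      · have h1 : ¬ ((Fin.last m : ℕ) < m) := by simp
        have h2 : ind 0 (Fin.last m) = 1 := by
          simp [hinddef]
        rw [hSapp, h2, if_neg h1]
        simp
      · intro c _ hc
        have hcv : (c : ℕ) < m := by
          have := c.isLt
          have : (c : ℕ) ≠ m := fun h => hc (by ext; simpa [Fin.last] using h)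
          omega
        have : ind 0 c = 0 := by
          simp only [hinddef]
          rw [if_neg]
          omega
        rw [this, mul_zero]
      · intro h; exact absurd (Finset.mem_univ _) h
    | succ i ih =>
      intro hi1
      have hi : i ≤ m := Nat.le_of_succ_le hi1
      have ihk := ih hi
      funext r
      set cc : Fin (m+1) := ⟨m - i - 1, by omega⟩ with hccdef
      have h1 : ∀ c : Fin (m+1), S r c * ind (i+1) c
          = S r c * ind i c + (if c = cc then S r c else 0) := by
        intro c
        have hcv := c.isLt
        have hcc : (c = cc) ↔ ((c:ℕ) = m - i - 1) := by
          rw [Fin.ext_iff]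
        by_cases hb : m ≤ (c:ℕ) + i
        · have ha : m ≤ (c:ℕ) + (i+1) := by omega
          have hne : c ≠ cc := fun h => absurd (hcc.mp h) (by omega)
          simp only [hinddef, if_pos ha, if_pos hb, if_neg hne, mul_one, add_zero]
        · by_cases ha : m ≤ (c:ℕ) + (i+1)
          · have heq : c = cc := hcc.mpr (by omega)
            simp only [hinddef, if_pos ha, if_neg hb, if_pos heq, mul_one, mul_zero, zero_add]
          · have hne : c ≠ cc := fun h => absurd (hcc.mp h) (by omega)
            simp only [hinddef, if_neg ha, if_neg hb, if_neg hne, mul_zero, add_zero]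
      have hstep : S.mulVec (ind (i+1)) r
          = S.mulVec (ind i) r + S r cc := by
        show ∑ c : Fin (m+1), S r c * ind (i+1) c = _
        calc ∑ c : Fin (m+1), S r c * ind (i+1) c
            = ∑ c : Fin (m+1), (S r c * ind i c + if c = cc then S r c else 0) :=
              Finset.sum_congr rfl fun c _ => h1 c
          _ = (∑ c : Fin (m+1), S r c * ind i c) + ∑ c : Fin (m+1), (if c = cc then S r c else 0) :=
              Finset.sum_add_distrib
          _ = S.mulVec (ind i) r + S r cc := by
              rw [Finset.sum_ite_eq' Finset.univ cc (fun c => S r c), if_pos (Finset.mem_univ _)]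
              rfl
      have hScc : S r cc = prev (k - i) r - prev (k - (i+1)) r := by
        have hlt : ((cc : Fin (m+1)) : ℕ) < m := by
          show m - i - 1 < m
          omega
        rw [hSapp, if_pos hlt]
        have e1 : k - m + (cc : ℕ) + 1 = k - i := by show k - m + (m - i - 1) + 1 = k - i; omega
        have e2 : k - m + (cc : ℕ) = k - (i+1) := by show k - m + (m - i - 1) = k - (i+1); omega
        rw [e1, e2]
      rw [hstep, congrFun ihk r, hScc]
      ring
  -- residual differences
  have hres_pt : ∀ (u : EuclideanSpace ℝ (Fin n)) (r : Fin n),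
      res A b u r = (A.mulVec u) r - b r := fun u r => rfl
  have hmv : ∀ (M : Matrix (Fin n) (Fin n) ℝ) (x y : Fin n → ℝ) (r : Fin n),
      M.mulVec x r - M.mulVec y r = M.mulVec (fun j => x j - y j) r := by
    intro M x y r
    simp [Matrix.mulVec, dotProduct, mul_sub, Finset.sum_sub_distrib]
  set w : Fin (m+1) → EuclideanSpace ℝ (Fin n) :=
    fun i => res A b (fp A b (prev k)) - res A b (prev (k - (i:ℕ))) with hwdef
  have hwv : ∀ i : Fin (m+1), (w i : Fin n → ℝ) = (A * S).mulVec (ind (i:ℕ)) := by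
    intro i
    have hi : (i:ℕ) ≤ m := Nat.lt_succ_iff.mp i.isLt
    funext r
    have h0 : w i r = A.mulVec (fp A b (prev k)) r - A.mulVec (prev (k - (i:ℕ))) r := by
      show res A b (fp A b (prev k)) r - res A b (prev (k - (i:ℕ))) r = _
      rw [hres_pt, hres_pt]
      ring
    rw [h0, hmv A]
    rw [show (fun j => fp A b (prev k) j - prev (k - (i:ℕ)) j) = S.mulVec (ind (i:ℕ)) from (hcol i hi).symm]
    rw [← Matrix.mulVec_mulVec]
  -- the minimizing residual and orthogonality
  set z : EuclideanSpace ℝ (Fin n) := res A b (fp A b (prev k)) + ∑ i, β i • w i with hzdef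
  have horth : ∀ j : Fin (m+1), (inner ℝ z (w j) : ℝ) = 0 := by
    intro j
    apply min_inner_eq_zero
    intro t
    have hm := hmin (fun i => β i + t * (if i = j then 1 else 0))
    have hsum : (∑ i, (β i + t * (if i = j then 1 else 0)) • w i) = (∑ i, β i • w i) + t • w j := by
      calc (∑ i, (β i + t * (if i = j then 1 else 0)) • w i)
          = ∑ i, (β i • w i + if i = j then t • w j else 0) := by
            refine Finset.sum_congr rfl fun i _ => ?_
            by_cases h : i = j
            · subst h; simp [add_smul]
            · simp [h]
        _ = (∑ i, β i • w i) + ∑ i, (if i = j then t • w j else 0) := Finset.sum_add_distrib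
        _ = (∑ i, β i • w i) + t • w j := by
            rw [Finset.sum_ite_eq' Finset.univ j (fun _ => t • w j), if_pos (Finset.mem_univ _)]
    have h1 : ngObj A b m prev k β = ‖z‖ := rfl
    have h2 : ngObj A b m prev k (fun i => β i + t * (if i = j then 1 else 0)) = ‖z + t • w j‖ := by
      show ‖res A b (fp A b (prev k)) + ∑ i, (β i + t * (if i = j then 1 else 0)) • w i‖ = _
      rw [hsum, hzdef, add_assoc]
    rw [h1, h2] at hm
    exact hm
  -- dot-product form
  have hdotw : ∀ j : Fin (m+1), dotProduct ((A*S)ᵀ.mulVec (z : Fin n → ℝ)) (ind (j:ℕ)) = 0 := by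
    intro j
    have h0 := horth j
    have h1 : dotProduct (z : Fin n → ℝ) (w j) = 0 := by
      rw [PiLp.inner_apply] at h0
      simpa [dotProduct, RCLike.inner_apply, mul_comm] using h0
    rw [hwv j] at h1
    rw [Matrix.dotProduct_mulVec] at h1
    rwa [← Matrix.mulVec_transpose] at h1
  set y : Fin (m+1) → ℝ := (A*S)ᵀ.mulVec (z : Fin n → ℝ) with hydef
  have hyd : ∀ i : ℕ, i ≤ m → dotProduct y (ind i) = 0 := by
    intro i hi
    have := hdotw ⟨i, by omega⟩
    simpa using this
  have hy0 : y = 0 := by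
    funext c
    have hcv : (c : ℕ) ≤ m := Nat.lt_succ_iff.mp c.isLt
    by_cases hcm : (c : ℕ) = m
    · have h0 := hyd 0 (Nat.zero_le m)
      have : dotProduct y (ind 0) = y c := by
        rw [dotProduct, Finset.sum_eq_single c]
        · have : ind 0 c = 1 := by simp only [hinddef]; rw [if_pos]; omega
          rw [this, mul_one]
        · intro b' _ hb'
          have : (b' : ℕ) ≠ m := fun h => hb' (by ext; omega)
          have hb'' : ind 0 b' = 0 := by
            simp only [hinddef]; rw [if_neg]
            have := b'.isLt; omega
          rw [hb'', mul_zero]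
        · intro h; exact absurd (Finset.mem_univ _) h
      rw [← this, h0]
      rfl
    · have hclt : (c : ℕ) < m := by omega
      have h1 := hyd (m - c) (by omega)
      have h2 := hyd (m - c - 1) (by omega)
      have key : ∀ c' : Fin (m+1),
          y c' * ind (m - c) c' - y c' * ind (m - (c:ℕ) - 1) c'
            = if c' = c then y c' else 0 := by
        intro c'
        have hcv' := c'.isLt
        have hcc : (c' = c) ↔ ((c':ℕ) = (c:ℕ)) := Fin.ext_iff
        by_cases ha : m ≤ (c':ℕ) + (m - (c:ℕ))
        · by_cases hb : m ≤ (c':ℕ) + (m - (c:ℕ) - 1)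
          · have : c' ≠ c := fun h => absurd (hcc.mp h) (by omega)
            simp only [hinddef, if_pos ha, if_pos hb, if_neg this, mul_one, sub_self]
          · have : c' = c := hcc.mpr (by omega)
            simp only [hinddef, if_pos ha, if_neg hb, if_pos this, mul_one, mul_zero, sub_zero]
        · have hb : ¬ m ≤ (c':ℕ) + (m - (c:ℕ) - 1) := by omega
          have : c' ≠ c := fun h => absurd (hcc.mp h) (by omega)
          simp only [hinddef, if_neg ha, if_neg hb, if_neg this, mul_zero, sub_self]
      have : y c = dotProduct y (ind (m - c)) - dotProduct y (ind (m - (c:ℕ) - 1)) := by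
        rw [dotProduct, dotProduct, ← Finset.sum_sub_distrib]
        rw [Finset.sum_congr rfl fun c' _ => key c']
        rw [Finset.sum_ite_eq' Finset.univ c (fun c' => y c'), if_pos (Finset.mem_univ _)]
      rw [this, h1, h2, sub_zero]
      rfl
  -- solve normal equations
  set γ : Fin (m+1) → ℝ := fun c => ∑ i : Fin (m+1), β i * ind (i:ℕ) c with hγdef
  have hWsum : (∑ i, β i • w i : EuclideanSpace ℝ (Fin n)) = (A*S).mulVec γ := by
    have h1 : (∑ i, β i • w i : Fin n → ℝ) = ∑ i : Fin (m+1), β i • ((A*S).mulVec (ind (i:ℕ))) := by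
      refine Finset.sum_congr rfl fun i _ => ?_
      rw [hwv i]
    rw [WithLp.ofLp_sum]
    simp only [WithLp.ofLp_smul]
    rw [h1, sum_smul_mulVec]
  set v : Fin n → ℝ := (res A b (fp A b (prev k))).ofLp with hvdef
  have hzfun : (z : Fin n → ℝ) = v + (A*S).mulVec γ := by
    show (res A b (fp A b (prev k)) : Fin n → ℝ) + (∑ i, β i • w i) = _
    rw [hWsum]
  have hnormal : ((A*S)ᵀ*(A*S)).mulVec γ = - ((A*S)ᵀ.mulVec v) := by
    have h0 : (A*S)ᵀ.mulVec (z : Fin n → ℝ) = 0 := hy0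
    rw [hzfun, Matrix.mulVec_add, Matrix.mulVec_mulVec] at h0
    linear_combination (norm := module) h0
  -- invertibility of Gram matrix
  have hGT : (A * S)ᵀ * (A * S) = Sᵀ * Aᵀ * A * S := by
    rw [Matrix.transpose_mul]
    simp only [Matrix.mul_assoc]
  have hGunit : IsUnit ((A*S)ᵀ*(A*S)) := by
    rw [← Matrix.mulVec_surjective_iff_isUnit]
    have hrk : ((A*S)ᵀ*(A*S)).rank = m+1 := by
      rw [Matrix.rank_transpose_mul_self]; exact hrank
    have htop : LinearMap.range ((A*S)ᵀ*(A*S)).mulVecLin = ⊤ := by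
      apply Submodule.eq_top_of_finrank_eq
      rw [show Module.finrank ℝ (LinearMap.range ((A*S)ᵀ*(A*S)).mulVecLin)
            = ((A*S)ᵀ*(A*S)).rank from rfl, hrk]
      simp [Module.finrank_pi]
    intro u
    have := LinearMap.range_eq_top.mp htop
    exact this u
  have hGdet : IsUnit (Sᵀ * Aᵀ * A * S).det := by
    rw [← hGT]
    exact (Matrix.isUnit_iff_isUnit_det _).mp hGunit
  set W : Matrix (Fin n) (Fin n) ℝ := S * (Sᵀ * Aᵀ * A * S)⁻¹ * Sᵀ * Aᵀ with hWdef
  have hγsol : S.mulVec γ = -(W.mulVec v) := by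
    have h1 : γ = (Sᵀ * Aᵀ * A * S)⁻¹.mulVec (-((A*S)ᵀ.mulVec v)) := by
      rw [← hnormal, hGT, Matrix.mulVec_mulVec, Matrix.nonsing_inv_mul _ hGdet, Matrix.one_mulVec]
    rw [h1]
    simp only [Matrix.mulVec_neg, Matrix.mulVec_mulVec]
    rw [show S * ((Sᵀ * Aᵀ * A * S)⁻¹ * (A * S)ᵀ) = W from by
      rw [Matrix.transpose_mul, hWdef]; simp only [Matrix.mul_assoc]]
  -- assemble, pointwise
  have hbr : ∀ r : Fin n, b r = (A.mulVec ustar) r := fun r => congrFun (congrArg WithLp.ofLp hustar.symm) r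
  set eP : Fin n → ℝ := fun r => prev k r - ustar r with hePdef
  have hsubmv : ∀ (M N : Matrix (Fin n) (Fin n) ℝ) (x : Fin n → ℝ) (r : Fin n),
      ((M - N).mulVec x) r = M.mulVec x r - N.mulVec x r := by
    intro M N x r
    rw [Matrix.sub_mulVec]
    rfl
  have hqe : ∀ r : Fin n, q r - ustar r = ((1-A).mulVec eP) r := by
    intro r
    have h4 : ((1-A).mulVec eP) r = ((1-A).mulVec (prev k)) r - ((1-A).mulVec ustar) r := by
      rw [hmv (1-A) (prev k) ustar r]
    have h5 : ((1-A).mulVec ustar) r = ustar r - (A.mulVec ustar) r := by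
      rw [hsubmv 1 A ustar r, Matrix.one_mulVec]
    have h6 : q r = ((1-A).mulVec (prev k)) r + b r := rfl
    rw [h6, hbr r, h4, h5]
    ring
  have hvr : ∀ r : Fin n, v r = ((A * (1-A)).mulVec eP) r := by
    intro r
    have h6 : v r = (A.mulVec (fp A b (prev k))) r - b r := rfl
    rw [h6, hbr r, hmv A (fp A b (prev k)) ustar r]
    rw [show (fun j => fp A b (prev k) j - ustar j) = (1-A).mulVec eP from funext hqe]
    rw [Matrix.mulVec_mulVec]
  have hsum_apply : ∀ (g : Fin (m+1) → EuclideanSpace ℝ (Fin n)) (r : Fin n),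
      (∑ i, g i) r = ∑ i, g i r := fun g r => by rw [WithLp.ofLp_sum]; exact Finset.sum_apply r Finset.univ (fun i => (g i).ofLp)
  have hnextr : ∀ r : Fin n, next r = q r + ∑ i : Fin (m+1), β i * (q r - prev (k - (i:ℕ)) r) := by
    intro r
    rw [hnext]
    show fp A b (prev k) r + (∑ i : Fin (m+1), β i • (fp A b (prev k) - prev (k - (i:ℕ)))) r = _
    congr 1
    rw [hsum_apply]
    exact Finset.sum_congr rfl fun i _ => rfl
  have hγc : ∀ c, γ c = ∑ i : Fin (m+1), β i * ind (i:ℕ) c := fun c => rfl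
  have hsum_mulVec : ∀ r : Fin n,
      (S.mulVec γ) r = ∑ i : Fin (m+1), β i * (S.mulVec (ind (i:ℕ))) r := by
    intro r
    show ∑ c, S r c * γ c = _
    calc ∑ c, S r c * γ c
        = ∑ c, ∑ i : Fin (m+1), β i * (S r c * ind (i:ℕ) c) := by
          refine Finset.sum_congr rfl fun c _ => ?_
          rw [hγc c, Finset.mul_sum]
          exact Finset.sum_congr rfl fun i _ => by ring
      _ = ∑ i : Fin (m+1), ∑ c, β i * (S r c * ind (i:ℕ) c) := Finset.sum_comm
      _ = ∑ i : Fin (m+1), β i * ∑ c, S r c * ind (i:ℕ) c := by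
          exact Finset.sum_congr rfl fun i _ => (Finset.mul_sum _ _ _).symm
      _ = _ := rfl
  have hfinal1 : ∀ r : Fin n, next r - ustar r = (((1 - W * A) * (1 - A)).mulVec eP) r := by
    intro r
    have hSγr : (S.mulVec γ) r = ∑ i : Fin (m+1), β i * (q r - prev (k - (i:ℕ)) r) := by
      rw [hsum_mulVec r]
      refine Finset.sum_congr rfl fun i _ => ?_
      rw [congrFun (hcol (i:ℕ) (Nat.lt_succ_iff.mp i.isLt)) r]
    have h1 : next r - ustar r = (q r - ustar r) + (S.mulVec γ) r := by
      rw [hnextr r, hSγr]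
      ring
    have hvv : v = (A * (1-A)).mulVec eP := funext hvr
    have h3 : (S.mulVec γ) r = -(((W * (A * (1-A))).mulVec eP) r) := by
      rw [congrFun hγsol r]
      show -((W.mulVec v) r) = _
      rw [hvv, Matrix.mulVec_mulVec]
    rw [h1, hqe r, h3]
    rw [show (1 - W * A) * (1 - A) = (1-A) - W * (A * (1-A)) from by noncomm_ring]
    rw [hsubmv (1-A) (W * (A * (1-A))) eP r]
    ring
  constructor
  · ext r
    show next r - ustar r = (((1 - W * A) * (1 - A)).mulVec eP) r
    exact hfinal1 r
  · ext r
    show (A.mulVec next) r - b r = (((1 - A * W) * (1 - A)).mulVec (res A b (prev k))) r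
    have hresPk : (res A b (prev k)).ofLp = A.mulVec eP := by
      funext j
      have h6 : res A b (prev k) j = (A.mulVec (prev k)) j - b j := rfl
      rw [h6, hbr j, hmv A (prev k) ustar j]
    rw [hresPk, Matrix.mulVec_mulVec, hbr r, hmv A next ustar r]
    rw [show (fun j => next j - ustar j) = ((1 - W * A) * (1 - A)).mulVec eP from funext hfinal1]
    rw [Matrix.mulVec_mulVec]
    rw [show A * ((1 - W * A) * (1 - A)) = (1 - A * W) * (1 - A) * A from by noncomm_ring]


end
end

section
/- Assume M = U Λ U⁻¹ is diagonalizable with U ∈ ℝ^{n×n} invertible and Λ real diagonal, all eigenvalues of M lie in an interval [a, b] where a and b have the same sign and 0, 1 ∉ [a, b], and m ≤ k. Starting from u₀, let u_j = q(u_{j−1}) for j = 1, …, k, and let u_{k+1} be produced by a single NGMRES(m) step from u_{k−m}, …, u_k. Then ‖r_{k+1}‖ ≤ ε(a, b, m+1) · κ₂(U) · ‖M r_k‖. -/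
open Matrix Polynomial Set

noncomputable section

namespace StmtTwoAux

open Finset

variable {n : ℕ}

lemma mulVecE_add (B : Matrix (Fin n) (Fin n) ℝ) (v w : EuclideanSpace ℝ (Fin n)) :
    mulVecE B (v + w) = mulVecE B v + mulVecE B w := by simp [mulVecE, Matrix.mulVec_add]

lemma mulVecE_sub (B : Matrix (Fin n) (Fin n) ℝ) (v w : EuclideanSpace ℝ (Fin n)) :
    mulVecE B (v - w) = mulVecE B v - mulVecE B w := by simp [mulVecE, Matrix.mulVec_sub]

lemma mulVecE_smul (B : Matrix (Fin n) (Fin n) ℝ) (t : ℝ) (v : EuclideanSpace ℝ (Fin n)) :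
    mulVecE B (t • v) = t • mulVecE B v := by simp [mulVecE, Matrix.mulVec_smul]

lemma mulVecE_sum {ι : Type*} (s : Finset ι) (B : Matrix (Fin n) (Fin n) ℝ)
    (f : ι → EuclideanSpace ℝ (Fin n)) :
    mulVecE B (∑ i ∈ s, f i) = ∑ i ∈ s, mulVecE B (f i) := by simp [mulVecE, Matrix.mulVec_sum]

lemma mulVecE_mulVecE (B C : Matrix (Fin n) (Fin n) ℝ) (v : EuclideanSpace ℝ (Fin n)) :
    mulVecE (B * C) v = mulVecE B (mulVecE C v) := by simp [mulVecE, Matrix.mulVec_mulVec]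

lemma mulVecE_one (v : EuclideanSpace ℝ (Fin n)) : mulVecE 1 v = v := by simp [mulVecE]

lemma euclid_sum_apply {ι : Type*} (s : Finset ι) (f : ι → EuclideanSpace ℝ (Fin n)) (j : Fin n) :
    (∑ i ∈ s, f i) j = ∑ i ∈ s, f i j := by simp

lemma euclid_add_apply (x y : EuclideanSpace ℝ (Fin n)) (j : Fin n) : (x + y) j = x j + y j := rfl

lemma euclid_sub_apply (x y : EuclideanSpace ℝ (Fin n)) (j : Fin n) : (x - y) j = x j - y j := rfl

lemma euclid_smul_apply (t : ℝ) (x : EuclideanSpace ℝ (Fin n)) (j : Fin n) :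
    (t • x) j = t * x j := rfl

lemma mulVecE_diagonal (e : Fin n → ℝ) (v : EuclideanSpace ℝ (Fin n)) (j : Fin n) :
    mulVecE (Matrix.diagonal e) v j = e j * v j := by simp [mulVecE, Matrix.mulVec_diagonal]

lemma norm_mulVecE_le (B : Matrix (Fin n) (Fin n) ℝ) (v : EuclideanSpace ℝ (Fin n)) :
    ‖mulVecE B v‖ ≤ opNorm B * ‖v‖ := by
  have h : mulVecE B v = Matrix.toEuclideanCLM (𝕜 := ℝ) B v := by
    apply (WithLp.equiv 2 _).symm.injective
    simp [mulVecE]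
    rfl
  rw [h]
  exact (Matrix.toEuclideanCLM (𝕜 := ℝ) B).le_opNorm v

lemma norm_le_of_pointwise {C : ℝ} (hC : 0 ≤ C) (z w : EuclideanSpace ℝ (Fin n))
    (h : ∀ i, |z i| ≤ C * |w i|) : ‖z‖ ≤ C * ‖w‖ := by
  rw [EuclideanSpace.norm_eq, EuclideanSpace.norm_eq]
  rw [show C = Real.sqrt (C^2) from (Real.sqrt_sq hC).symm, ← Real.sqrt_mul (by positivity)]
  apply Real.sqrt_le_sqrt
  rw [Finset.mul_sum]
  apply Finset.sum_le_sum
  intro i _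
  have := h i
  simp only [Real.norm_eq_abs]
  nlinarith [abs_nonneg (z i), abs_nonneg (w i)]

lemma mulVecE_matsub (B C : Matrix (Fin n) (Fin n) ℝ) (v : EuclideanSpace ℝ (Fin n)) :
    mulVecE (B - C) v = mulVecE B v - mulVecE C v := by simp [mulVecE, Matrix.sub_mulVec]

lemma res_fp (A : Matrix (Fin n) (Fin n) ℝ) (b v : EuclideanSpace ℝ (Fin n)) :
    res A b (fp A b v) = mulVecE (1 - A) (res A b v) := by
  simp only [res, fp, mulVecE_add, mulVecE_sub, ← mulVecE_mulVecE]
  rw [show A * (1 - A) = (1 - A) * A by noncomm_ring]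
  simp only [mulVecE_matsub, mulVecE_one]
  abel

lemma poly_repr (m : ℕ) (p : Polynomial ℝ) (hdeg : p.natDegree ≤ m+1) (h1 : p.eval 1 = 1)
    (x : ℝ) :
    1 + ∑ i : Fin (m+1), (-(p.coeff ((i:ℕ)+1))) * (1 - x^((i:ℕ)+1)) = p.eval x := by
  have hlt : p.natDegree < m + 2 := by omega
  have hx := Polynomial.eval_eq_sum_range' hlt x
  have h1' := Polynomial.eval_eq_sum_range' hlt 1
  rw [h1] at h1'
  rw [Finset.sum_range_succ'] at hx h1'
  simp only [one_pow, mul_one, pow_zero] at h1' hx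
  rw [Fin.sum_univ_eq_sum_range (fun i => (-(p.coeff (i+1))) * (1 - x^(i+1)))]
  rw [hx]
  have expand : ∑ i ∈ range (m+1), (-(p.coeff (i+1))) * (1 - x^(i+1))
      = -∑ i ∈ range (m+1), p.coeff (i+1) + ∑ i ∈ range (m+1), p.coeff (i+1) * x^(i+1) := by
    rw [neg_add_eq_sub, ← Finset.sum_sub_distrib]
    apply Finset.sum_congr rfl; intro i _; ring
  rw [expand]
  linarith

lemma inv_diagonal' (d : Fin n → ℝ) (hd : ∀ i, d i ≠ 0) :
    (Matrix.diagonal d)⁻¹ = Matrix.diagonal (fun i => (d i)⁻¹) := by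
  apply Matrix.inv_eq_right_inv
  rw [Matrix.diagonal_mul_diagonal]
  convert Matrix.diagonal_one with i
  exact mul_inv_cancel₀ (hd i)

end StmtTwoAux

open StmtTwoAux

/-- one-step NGMRES(m) bound in the diagonalizable case,
`‖r_{k+1}‖ ≤ ε(a, b, m+1) · κ₂(U) · ‖M r_k‖`. -/
theorem stmt_2 {n m k : ℕ} (A U : Matrix (Fin n) (Fin n) ℝ) (d : Fin n → ℝ)
    (hA : IsUnit A) (hU : IsUnit U)
    (hM : (1 : Matrix (Fin n) (Fin n) ℝ) - A = U * Matrix.diagonal d * U⁻¹)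
    (a c : ℝ) (hac : a < c) (hsign : 0 < a * c)
    (h0 : (0 : ℝ) ∉ Set.Icc a c) (h1 : (1 : ℝ) ∉ Set.Icc a c)
    (hd : ∀ i, d i ∈ Set.Icc a c)
    (b : EuclideanSpace ℝ (Fin n)) (u : ℕ → EuclideanSpace ℝ (Fin n))
    (hfp : ∀ j, 1 ≤ j → j ≤ k → u j = fp A b (u (j-1)))
    (hmk : m ≤ k) (next : EuclideanSpace ℝ (Fin n))
    (hstep : NGMRESStep A b m u k next) :
    ‖res A b next‖ ≤ eps a c (m+1) * condNum U * ‖mulVecE (1 - A) (res A b (u k))‖ := by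
  classical
  obtain ⟨β, hmin, hnext⟩ := hstep
  have hd0 : ∀ i, d i ≠ 0 := fun i hi => h0 (hi ▸ hd i)
  have hUdet : IsUnit U.det := (Matrix.isUnit_iff_isUnit_det U).mp hU
  have hUU : U * U⁻¹ = 1 := Matrix.mul_nonsing_inv U hUdet
  have hU'U : U⁻¹ * U = 1 := Matrix.nonsing_inv_mul U hUdet
  set D := Matrix.diagonal d with hD
  set Di := Matrix.diagonal (fun i => (d i)⁻¹) with hDi
  have hDDi : D * Di = 1 := by
    rw [hD, hDi, Matrix.diagonal_mul_diagonal]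
    convert Matrix.diagonal_one with i
    exact mul_inv_cancel₀ (hd0 i)
  have hDiD : Di * D = 1 := by
    rw [hD, hDi, Matrix.diagonal_mul_diagonal]
    convert Matrix.diagonal_one with i
    exact inv_mul_cancel₀ (hd0 i)
  set M := (1 : Matrix (Fin n) (Fin n) ℝ) - A with hMdef
  set N := U * Di * U⁻¹ with hN
  have hMN : M * N = 1 := by
    rw [hM, hN]
    calc U * D * U⁻¹ * (U * Di * U⁻¹) = U * D * (U⁻¹ * U) * Di * U⁻¹ := by
          simp only [Matrix.mul_assoc]
      _ = 1 := by rw [hU'U, Matrix.mul_one, Matrix.mul_assoc U D Di, hDDi, Matrix.mul_one, hUU]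
  have hNM : N * M = 1 := by
    rw [hM, hN]
    calc U * Di * U⁻¹ * (U * D * U⁻¹) = U * Di * (U⁻¹ * U) * D * U⁻¹ := by
          simp only [Matrix.mul_assoc]
      _ = 1 := by rw [hU'U, Matrix.mul_one, Matrix.mul_assoc U Di D, hDiD, Matrix.mul_one, hUU]
  have hNpow : ∀ j : ℕ, N ^ j = U * Di ^ j * U⁻¹ := by
    intro j
    induction j with
    | zero => simp [hUU]
    | succ j ih =>
      rw [pow_succ, ih, hN]
      calc U * Di ^ j * U⁻¹ * (U * Di * U⁻¹) = U * Di ^ j * (U⁻¹ * U) * Di * U⁻¹ := by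
            simp only [Matrix.mul_assoc]
        _ = U * Di ^ (j+1) * U⁻¹ := by
            rw [hU'U, Matrix.mul_one, Matrix.mul_assoc U (Di ^ j) Di, ← pow_succ]
  have hNMpow : ∀ j : ℕ, N ^ j * M ^ j = 1 := by
    intro j
    induction j with
    | zero => simp
    | succ j ih =>
      rw [pow_succ N, pow_succ' M, Matrix.mul_assoc, ← Matrix.mul_assoc N M, hNM,
        Matrix.one_mul, ih]
  have hrk : ∀ i, i ≤ m → mulVecE (M ^ i) (res A b (u (k - i))) = res A b (u k) := by
    intro i
    induction i with
    | zero => intro _; simp [mulVecE_one]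
    | succ i ih =>
      intro hi
      have huki : u (k - i) = fp A b (u (k - i - 1)) := hfp (k - i) (by omega) (by omega)
      have hki : k - i - 1 = k - (i+1) := by omega
      rw [← ih (by omega), huki, hki, res_fp, ← hMdef, ← mulVecE_mulVecE, ← pow_succ]
  set r := res A b (u k) with hr
  set s := mulVecE M r with hs
  have hres_fp_uk : res A b (fp A b (u k)) = s := by
    rw [hs, hr, hMdef]
    exact res_fp A b (u k)
  have hreski : ∀ i : ℕ, i ≤ m → res A b (u (k - i)) = mulVecE (N ^ (i+1)) s := by
    intro i hi
    have h1 : mulVecE (N ^ i) (mulVecE (M ^ i) (res A b (u (k - i)))) = res A b (u (k - i)) := by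
      rw [← mulVecE_mulVecE, hNMpow i, mulVecE_one]
    rw [hrk i hi] at h1
    rw [← h1, hs, ← mulVecE_mulVecE]
    congr 1
    rw [pow_succ, Matrix.mul_assoc, hNM, Matrix.mul_one]
  set w := mulVecE U⁻¹ s with hw
  have hsUw : s = mulVecE U w := by rw [hw, ← mulVecE_mulVecE, hUU, mulVecE_one]
  have hkey : ∀ γ : Fin (m+1) → ℝ,
      ngObj A b m u k γ =
        ‖mulVecE U (w + ∑ i : Fin (m+1), γ i • (w - mulVecE (Di ^ ((i:ℕ)+1)) w))‖ := by
    intro γ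
    have hterm2 : ∀ i : Fin (m+1), s - res A b (u (k - (i:ℕ))) =
        mulVecE U (w - mulVecE (Di ^ ((i:ℕ)+1)) w) := by
      intro i
      rw [hreski (i:ℕ) (by omega), hNpow, mulVecE_mulVecE, mulVecE_mulVecE, ← hw,
        mulVecE_sub, ← hsUw]
    simp only [ngObj, hres_fp_uk, hterm2, mulVecE_add, mulVecE_sum, mulVecE_smul, ← hsUw]
  have hresnext : res A b next = res A b (fp A b (u k)) +
      ∑ i : Fin (m+1), β i • (res A b (fp A b (u k)) - res A b (u (k - (i:ℕ)))) := by
    rw [hnext]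
    simp only [res, mulVecE_add, mulVecE_sum, mulVecE_smul, mulVecE_sub]
    have hterm : ∀ i : Fin (m+1),
        (mulVecE A (fp A b (u k)) - b) - (mulVecE A (u (k - (i:ℕ))) - b) =
          mulVecE A (fp A b (u k)) - mulVecE A (u (k - (i:ℕ))) := fun i => by abel
    simp only [hterm]
    abel
  have hnorm_eq : ‖res A b next‖ = ngObj A b m u k β := by
    rw [hresnext]; simp only [ngObj]
  have hle : ∀ γ, ‖res A b next‖ ≤ ngObj A b m u k γ := fun γ => hnorm_eq ▸ hmin γ
  have hsigns : (0 < a ∧ 0 < c) ∨ (a < 0 ∧ c < 0) := by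
    rcases mul_pos_iff.mp hsign with h | h
    · exact Or.inl h
    · exact Or.inr h
  have hIccle : 1/c ≤ 1/a := by
    rcases hsigns with ⟨ha, hc⟩ | ⟨ha, hc⟩
    · exact one_div_le_one_div_of_le ha (le_of_lt hac)
    · exact one_div_le_one_div_of_neg_of_le hc (le_of_lt hac)
  have hmem : ∀ j : Fin n, (d j)⁻¹ ∈ Set.Icc (1/c) (1/a) := by
    intro j
    obtain ⟨hdj1, hdj2⟩ := hd j
    rw [← one_div]
    rcases hsigns with ⟨ha, hc⟩ | ⟨ha, hc⟩
    · have hdj : 0 < d j := lt_of_lt_of_le ha hdj1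
      exact ⟨one_div_le_one_div_of_le hdj hdj2, one_div_le_one_div_of_le ha hdj1⟩
    · have hdj : d j < 0 := lt_of_le_of_lt hdj2 hc
      exact ⟨one_div_le_one_div_of_neg_of_le hc hdj2,
        one_div_le_one_div_of_neg_of_le hdj hdj1⟩
  set S := {t : ℝ | ∃ p : Polynomial ℝ, p.natDegree ≤ (m+1) ∧ p.eval 1 = 1 ∧
    t = sSup ((fun x => |p.eval x|) '' Set.Icc (1/c) (1/a))} with hSdef
  have hepsS : eps a c (m+1) = sInf S := rfl
  have hSne : S.Nonempty :=
    ⟨sSup ((fun x => |Polynomial.eval x (1 : Polynomial ℝ)|) '' Set.Icc (1/c) (1/a)),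
      1, by simp, by simp, rfl⟩
  have hmain : ∀ t ∈ S, ‖res A b next‖ ≤ t * (condNum U * ‖s‖) := by
    rintro t ⟨p, hdeg, hp1, rfl⟩
    have hcont : Continuous fun x : ℝ => |p.eval x| := p.continuous.abs
    have hbdd : BddAbove ((fun x => |p.eval x|) '' Set.Icc (1/c) (1/a)) :=
      (isCompact_Icc.image hcont).bddAbove
    have hevle : ∀ x ∈ Set.Icc (1/c) (1/a),
        |p.eval x| ≤ sSup ((fun x => |p.eval x|) '' Set.Icc (1/c) (1/a)) :=
      fun x hx => le_csSup hbdd ⟨x, hx, rfl⟩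
    set t' := sSup ((fun x => |p.eval x|) '' Set.Icc (1/c) (1/a)) with ht'
    have ht0 : 0 ≤ t' :=
      le_trans (abs_nonneg _) (hevle (1/c) ⟨le_refl _, hIccle⟩)
    set γ : Fin (m+1) → ℝ := fun i => -(p.coeff ((i:ℕ)+1)) with hγ
    set z : EuclideanSpace ℝ (Fin n) := WithLp.toLp 2 (fun j => p.eval ((d j)⁻¹) * w j) with hz
    have hDipow : ∀ i : ℕ, Di ^ (i+1) = Matrix.diagonal (fun j => ((d j)⁻¹)^(i+1)) := by
      intro i
      rw [hDi, Matrix.diagonal_pow]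
      congr 1
    have hzeq : w + ∑ i : Fin (m+1), γ i • (w - mulVecE (Di ^ ((i:ℕ)+1)) w) = z := by
      ext j
      rw [euclid_add_apply, euclid_sum_apply]
      simp only [euclid_smul_apply, euclid_sub_apply, hDipow, mulVecE_diagonal]
      calc w j + ∑ i : Fin (m+1), γ i * (w j - ((d j)⁻¹)^((i:ℕ)+1) * w j)
          = (1 + ∑ i : Fin (m+1), γ i * (1 - ((d j)⁻¹)^((i:ℕ)+1))) * w j := by
            rw [add_mul, one_mul, Finset.sum_mul]
            congr 1
            apply Finset.sum_congr rfl
            intro i _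
            ring
        _ = p.eval ((d j)⁻¹) * w j := by
            rw [hγ, poly_repr m p hdeg hp1 ((d j)⁻¹)]
        _ = z j := rfl
    have h1 : ‖res A b next‖ ≤ ‖mulVecE U z‖ := by
      rw [← hzeq]
      exact (hle γ).trans_eq (hkey γ)
    have h2 : ‖mulVecE U z‖ ≤ opNorm U * ‖z‖ := norm_mulVecE_le U z
    have h3 : ‖z‖ ≤ t' * ‖w‖ := by
      apply norm_le_of_pointwise ht0
      intro j
      have : |z j| = |p.eval ((d j)⁻¹)| * |w j| := by rw [hz]; exact abs_mul _ _
      rw [this]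
      have hple : |p.eval ((d j)⁻¹)| ≤ t' := hevle _ (hmem j)
      exact mul_le_mul_of_nonneg_right hple (abs_nonneg _)
    have h4 : ‖w‖ ≤ opNorm U⁻¹ * ‖s‖ := norm_mulVecE_le U⁻¹ s
    have hop1 : (0:ℝ) ≤ opNorm U := norm_nonneg _
    calc ‖res A b next‖ ≤ opNorm U * ‖z‖ := le_trans h1 h2
      _ ≤ opNorm U * (t' * ‖w‖) := by
          exact mul_le_mul_of_nonneg_left h3 hop1
      _ ≤ opNorm U * (t' * (opNorm U⁻¹ * ‖s‖)) := by
          apply mul_le_mul_of_nonneg_left _ hop1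
          exact mul_le_mul_of_nonneg_left h4 ht0
      _ = t' * (condNum U * ‖s‖) := by rw [condNum]; ring
  have hC0 : 0 ≤ condNum U * ‖s‖ :=
    mul_nonneg (mul_nonneg (norm_nonneg _) (norm_nonneg _)) (norm_nonneg _)
  have hgoal : ‖res A b next‖ ≤ eps a c (m+1) * (condNum U * ‖s‖) := by
    rcases eq_or_lt_of_le hC0 with hC | hC
    · obtain ⟨t0, ht0S⟩ := hSne
      have h := hmain t0 ht0S
      rw [← hC] at h ⊢
      simpa using h
    · have hdiv : ∀ t ∈ S, ‖res A b next‖ / (condNum U * ‖s‖) ≤ t :=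
        fun t ht => (div_le_iff₀ hC).mpr (hmain t ht)
      have hinf := le_csInf hSne hdiv
      rw [hepsS]
      calc ‖res A b next‖
          = (‖res A b next‖ / (condNum U * ‖s‖)) * (condNum U * ‖s‖) := by
            rw [div_mul_cancel₀ _ hC.ne']
        _ ≤ sInf S * (condNum U * ‖s‖) := mul_le_mul_of_nonneg_right hinf hC0
  rw [mul_assoc]
  exact hgoal

end
end

section
/- Assume M = U Λ U⁻¹ is diagonalizable with U ∈ ℝ^{n×n} invertible and Λ real diagonal. Starting from u₀, let u_j = q(u_{j−1}) for j = 1, …, m, and let u_{m+1} be produced by a single NGMRES(m) step from u₀, …, u_m (the case m = k of one-step NGMRES). Then ‖r_{m+1}‖ ≤ χ(m+1) · κ₂(U) · ‖r₀‖. -/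
open Matrix Polynomial Set

noncomputable section

section AuxLemmas

lemma mulVecE_add {n : ℕ} (M : Matrix (Fin n) (Fin n) ℝ) (x y : EuclideanSpace ℝ (Fin n)) :
    mulVecE M (x + y) = mulVecE M x + mulVecE M y := by
  unfold mulVecE
  ext i
  simp [Matrix.mulVec, dotProduct, PiLp.add_apply, mul_add, Finset.sum_add_distrib]

lemma mulVecE_sub {n : ℕ} (M : Matrix (Fin n) (Fin n) ℝ) (x y : EuclideanSpace ℝ (Fin n)) :
    mulVecE M (x - y) = mulVecE M x - mulVecE M y := by
  unfold mulVecE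
  ext i
  simp [Matrix.mulVec, dotProduct, PiLp.sub_apply, mul_sub, Finset.sum_sub_distrib]

lemma mulVecE_smul {n : ℕ} (M : Matrix (Fin n) (Fin n) ℝ) (c : ℝ) (x : EuclideanSpace ℝ (Fin n)) :
    mulVecE M (c • x) = c • mulVecE M x := by
  unfold mulVecE
  ext i
  simp [Matrix.mulVec, dotProduct, PiLp.smul_apply, Finset.mul_sum, smul_eq_mul]
  exact Finset.sum_congr rfl fun j _ => by ring

lemma mulVecE_mulVecE {n : ℕ} (M N : Matrix (Fin n) (Fin n) ℝ) (x : EuclideanSpace ℝ (Fin n)) :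
    mulVecE M (mulVecE N x) = mulVecE (M * N) x := by
  unfold mulVecE
  simp [Matrix.mulVec_mulVec]

lemma mulVecE_sum {n : ℕ} (M : Matrix (Fin n) (Fin n) ℝ) {ι : Type*} (s : Finset ι)
    (f : ι → EuclideanSpace ℝ (Fin n)) :
    mulVecE M (∑ i ∈ s, f i) = ∑ i ∈ s, mulVecE M (f i) := by
  classical
  induction s using Finset.induction with
  | empty => unfold mulVecE; ext i; simp [Matrix.mulVec, dotProduct]
  | insert _ _ h ih => rw [Finset.sum_insert h, Finset.sum_insert h, mulVecE_add, ih]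

lemma sum_mulVecE {n : ℕ} {ι : Type*} (s : Finset ι) (f : ι → Matrix (Fin n) (Fin n) ℝ)
    (x : EuclideanSpace ℝ (Fin n)) :
    mulVecE (∑ i ∈ s, f i) x = ∑ i ∈ s, mulVecE (f i) x := by
  classical
  induction s using Finset.induction with
  | empty => unfold mulVecE; ext i; simp [Matrix.mulVec, dotProduct]
  | insert _ _ h ih =>
    rw [Finset.sum_insert h, Finset.sum_insert h, ← ih]
    unfold mulVecE
    rw [Matrix.add_mulVec, WithLp.toLp_add]

lemma smul_mulVecE {n : ℕ} (c : ℝ) (M : Matrix (Fin n) (Fin n) ℝ) (x : EuclideanSpace ℝ (Fin n)) :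
    mulVecE (c • M) x = c • mulVecE M x := by
  unfold mulVecE
  ext i
  simp [Matrix.mulVec, dotProduct, PiLp.smul_apply, Finset.mul_sum, smul_eq_mul, mul_assoc]

lemma mulVecE_eq_clm {n : ℕ} (M : Matrix (Fin n) (Fin n) ℝ) (v : EuclideanSpace ℝ (Fin n)) :
    mulVecE M v = (Matrix.toEuclideanCLM (𝕜 := ℝ) M) v := by ext i; simp [mulVecE]

lemma norm_mulVecE_le {n : ℕ} (M : Matrix (Fin n) (Fin n) ℝ) (v : EuclideanSpace ℝ (Fin n)) :
    ‖mulVecE M v‖ ≤ opNorm M * ‖v‖ := by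
  rw [mulVecE_eq_clm]
  exact (Matrix.toEuclideanCLM (𝕜 := ℝ) M).le_opNorm v

lemma opNorm_nonneg {n : ℕ} (M : Matrix (Fin n) (Fin n) ℝ) : 0 ≤ opNorm M :=
  norm_nonneg _

lemma norm_mulVecE_diagonal_le {n : ℕ} (e : Fin n → ℝ) (C : ℝ) (hC : 0 ≤ C)
    (h : ∀ i, |e i| ≤ C) (v : EuclideanSpace ℝ (Fin n)) :
    ‖mulVecE (Matrix.diagonal e) v‖ ≤ C * ‖v‖ := by
  rw [EuclideanSpace.norm_eq, EuclideanSpace.norm_eq]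
  have h1 : ∀ i, ‖mulVecE (Matrix.diagonal e) v i‖ ^ 2 ≤ C^2 * ‖v i‖^2 := by
    intro i
    have h0 : mulVecE (Matrix.diagonal e) v i = e i * v i := by simp [mulVecE, Matrix.mulVec_diagonal]
    rw [h0]
    have h2 : ‖e i * v i‖ = |e i| * ‖v i‖ := by simp [abs_mul, Real.norm_eq_abs]
    rw [h2, mul_pow]
    apply mul_le_mul_of_nonneg_right _ (sq_nonneg _)
    exact pow_le_pow_left₀ (abs_nonneg _) (h i) 2
  calc Real.sqrt (∑ i, ‖mulVecE (Matrix.diagonal e) v i‖ ^ 2)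
      ≤ Real.sqrt (∑ i, C^2 * ‖v i‖^2) := Real.sqrt_le_sqrt (Finset.sum_le_sum fun i _ => h1 i)
    _ = C * Real.sqrt (∑ i, ‖v i‖^2) := by
        rw [← Finset.mul_sum, Real.sqrt_mul (sq_nonneg C), Real.sqrt_sq hC]

lemma opNorm_ne_zero {n : ℕ} (M : Matrix (Fin n) (Fin n) ℝ) (hM : M ≠ 0) : opNorm M ≠ 0 := by
  intro h
  apply hM
  have h0 : ∀ v : EuclideanSpace ℝ (Fin n), mulVecE M v = 0 := by
    intro v
    rw [mulVecE_eq_clm]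
    have hz : (Matrix.toEuclideanCLM (𝕜 := ℝ) M) = 0 := norm_eq_zero.mp h
    rw [hz]; rfl
  ext i j
  have := congrArg (fun v => v i) (h0 (WithLp.toLp 2 (Pi.single j 1)))
  simpa [mulVecE, Matrix.mulVec, dotProduct, Pi.single_apply] using this

lemma spectrum_conj_diagonal {n : ℕ} (U : Matrix (Fin n) (Fin n) ℝ) (d : Fin n → ℝ)
    (hU : IsUnit U) : spectrum ℝ (U * Matrix.diagonal d * U⁻¹) = Set.range d := by
  have huu : U * U⁻¹ = 1 := Matrix.mul_nonsing_inv _ ((Matrix.isUnit_iff_isUnit_det U).mp hU)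
  ext x
  rw [spectrum.mem_iff]
  have hsc : U * Matrix.diagonal (fun _ : Fin n => x) = Matrix.diagonal (fun _ : Fin n => x) * U := by
    have hd : Matrix.diagonal (fun _ : Fin n => x) = x • (1 : Matrix (Fin n) (Fin n) ℝ) := by
      simp [Matrix.smul_one_eq_diagonal]
    rw [hd]; simp [Matrix.mul_smul, Matrix.smul_mul]
  have key : (algebraMap ℝ (Matrix (Fin n) (Fin n) ℝ)) x - U * Matrix.diagonal d * U⁻¹
      = U * Matrix.diagonal (fun i => x - d i) * U⁻¹ := by
    have h1 : U * Matrix.diagonal (fun i => x - d i) * U⁻¹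
        = Matrix.diagonal (fun _ : Fin n => x) * (U * U⁻¹) - U * Matrix.diagonal d * U⁻¹ := by
      rw [← Matrix.diagonal_sub, Matrix.mul_sub, Matrix.sub_mul, hsc, Matrix.mul_assoc]
    rw [h1, huu, Matrix.mul_one, Matrix.algebraMap_eq_diagonal]
    congr 1
  rw [key]
  have hiff : IsUnit (U * Matrix.diagonal (fun i => x - d i) * U⁻¹) ↔ ∀ i, x - d i ≠ 0 := by
    rw [Matrix.isUnit_iff_isUnit_det, Matrix.det_conj hU, ← Matrix.isUnit_iff_isUnit_det,
      Matrix.isUnit_diagonal]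
    constructor
    · intro h i
      have := h.map (Pi.evalMonoidHom (fun _ : Fin n => ℝ) i)
      simpa [isUnit_iff_ne_zero] using this
    · intro h
      exact IsUnit.of_mul_eq_one (fun i => (x - d i)⁻¹) (funext fun i => mul_inv_cancel₀ (h i))
  rw [hiff]
  push_neg
  constructor
  · rintro ⟨i, hi⟩; exact ⟨i, (sub_eq_zero.mp hi).symm⟩
  · rintro ⟨i, rfl⟩; exact ⟨i, sub_self _⟩

lemma keyid {V : Type*} [AddCommGroup V] [Module ℝ V] (m : ℕ) (c : ℕ → ℝ)
    (hc : ∑ j ∈ Finset.range (m+2), c j = 1) (w : ℕ → V) :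
    w (m+1) + ∑ i : Fin (m+1), (-(c (m - (i:ℕ)))) • (w (m+1) - w (m - (i:ℕ)))
      = ∑ j ∈ Finset.range (m+2), c j • w j := by
  have h1 : ∑ i : Fin (m+1), (-(c (m - (i:ℕ)))) • (w (m+1) - w (m - (i:ℕ)))
      = (∑ i : Fin (m+1), -(c (m - (i:ℕ)))) • w (m+1)
        - ∑ i : Fin (m+1), (-(c (m - (i:ℕ)))) • w (m - (i:ℕ)) := by
    rw [Finset.sum_smul, ← Finset.sum_sub_distrib]
    exact Finset.sum_congr rfl fun i _ => smul_sub _ _ _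
  have h2 : ∑ i : Fin (m+1), (-(c (m - (i:ℕ)))) • w (m - (i:ℕ))
      = -∑ j ∈ Finset.range (m+1), c j • w j := by
    rw [Fin.sum_univ_eq_sum_range (fun i => (-(c (m - i))) • w (m - i)) (m+1)]
    rw [← Finset.sum_neg_distrib]
    rw [← Finset.sum_range_reflect (fun j => -(c j • w j)) (m+1)]
    exact Finset.sum_congr rfl fun i hi => by
      simp only [Nat.add_sub_cancel]
      rw [neg_smul]
  have h3 : ∑ i : Fin (m+1), -(c (m - (i:ℕ))) = c (m+1) - 1 := by
    rw [Fin.sum_univ_eq_sum_range (fun i => -(c (m - i))) (m+1), Finset.sum_neg_distrib]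
    have hre : ∑ x ∈ Finset.range (m+1), c (m - x) = ∑ x ∈ Finset.range (m+1), c x := by
      rw [← Finset.sum_range_reflect c (m+1)]
      exact Finset.sum_congr rfl fun i hi => by congr 1
    have hsucc := Finset.sum_range_succ c (m+1)
    rw [hsucc] at hc
    rw [hre]
    linarith
  rw [h1, h2, h3, sub_smul, one_smul, sub_neg_eq_add]
  conv_rhs => rw [Finset.sum_range_succ]
  abel

lemma conj_pow' {n : ℕ} (U D : Matrix (Fin n) (Fin n) ℝ) (hU : IsUnit U) (j : ℕ) :
    (U * D * U⁻¹) ^ j = U * D ^ j * U⁻¹ := by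
  have hui : U⁻¹ * U = 1 := Matrix.nonsing_inv_mul _ ((Matrix.isUnit_iff_isUnit_det U).mp hU)
  have huu : U * U⁻¹ = 1 := Matrix.mul_nonsing_inv _ ((Matrix.isUnit_iff_isUnit_det U).mp hU)
  induction j with
  | zero => simp [huu]
  | succ k ih =>
    rw [pow_succ, ih, pow_succ]
    simp only [Matrix.mul_assoc]
    rw [← Matrix.mul_assoc U⁻¹ U (D * U⁻¹), hui, Matrix.one_mul]

lemma sum_smul_diag_pow {n m : ℕ} (d : Fin n → ℝ) (c : ℕ → ℝ) :
    ∑ j ∈ Finset.range (m+2), c j • (Matrix.diagonal d) ^ j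
      = Matrix.diagonal (fun i => ∑ j ∈ Finset.range (m+2), c j * d i ^ j) := by
  ext i k
  by_cases h : i = k
  · subst h
    simp [Matrix.sum_apply, Matrix.diagonal_pow, Matrix.diagonal_apply_eq]
  · simp [Matrix.sum_apply, Matrix.diagonal_pow, Matrix.diagonal_apply_ne _ h, h]

end AuxLemmas

/-- one-step NGMRES(m) with m = k in the diagonalizable case,
`‖r_{m+1}‖ ≤ χ(m+1) · κ₂(U) · ‖r₀‖`. -/
theorem stmt_3 {n m : ℕ} (A U : Matrix (Fin n) (Fin n) ℝ) (d : Fin n → ℝ)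
    (hA : IsUnit A) (hU : IsUnit U)
    (hM : (1 : Matrix (Fin n) (Fin n) ℝ) - A = U * Matrix.diagonal d * U⁻¹)
    (b : EuclideanSpace ℝ (Fin n)) (u : ℕ → EuclideanSpace ℝ (Fin n))
    (hfp : ∀ j, 1 ≤ j → j ≤ m → u j = fp A b (u (j-1)))
    (next : EuclideanSpace ℝ (Fin n)) (hstep : NGMRESStep A b m u m next) :
    ‖res A b next‖ ≤ chiSp ((1 : Matrix (Fin n) (Fin n) ℝ) - A) (m+1) * condNum U *
      ‖res A b (u 0)‖ := by
  obtain ⟨β, hβmin, hnext⟩ := hstep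
  rcases Nat.eq_zero_or_pos n with hn | hn
  · subst hn
    have h0 : ∀ v : EuclideanSpace ℝ (Fin 0), ‖v‖ = 0 := fun v => by
      simp [EuclideanSpace.norm_eq]
    rw [h0, h0, mul_zero]
  · have i0 : Fin n := ⟨0, hn⟩
    have hdetU := (Matrix.isUnit_iff_isUnit_det U).mp hU
    have huu : U * U⁻¹ = 1 := Matrix.mul_nonsing_inv _ hdetU
    -- the residual contracts by M under the fixed-point map
    have hresfp : ∀ v, res A b (fp A b v)
        = mulVecE ((1 : Matrix (Fin n) (Fin n) ℝ) - A) (res A b v) := by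
      intro v
      show mulVecE A (mulVecE (1 - A) v + b) - b
          = mulVecE (1 - A) (mulVecE A v - b)
      rw [mulVecE_add, mulVecE_mulVecE, mulVecE_sub, mulVecE_mulVecE]
      have e3 : A * (1 - A) = (1 - A) * A := by
        rw [Matrix.mul_sub, Matrix.sub_mul, Matrix.mul_one, Matrix.one_mul]
      have e4 : mulVecE ((1 : Matrix (Fin n) (Fin n) ℝ) - A) b = b - mulVecE A b := by
        show WithLp.toLp 2 ((1 - A).mulVec b) = _
        rw [Matrix.sub_mulVec, Matrix.one_mulVec]
        rfl
      rw [e3, e4]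
      abel
    -- residuals of the fixed-point iterates
    have hres : ∀ j, j ≤ m → res A b (u j)
        = mulVecE (((1 : Matrix (Fin n) (Fin n) ℝ) - A) ^ j) (res A b (u 0)) := by
      intro j
      induction j with
      | zero =>
        intro _
        rw [pow_zero]
        show res A b (u 0) = WithLp.toLp 2 ((1 : Matrix (Fin n) (Fin n) ℝ).mulVec (res A b (u 0)))
        rw [Matrix.one_mulVec]
      | succ k ih =>
        intro hk
        rw [hfp (k+1) (Nat.succ_le_succ (Nat.zero_le _)) hk]
        simp only [Nat.add_sub_cancel]
        rw [hresfp, ih (le_trans (Nat.le_succ k) hk), mulVecE_mulVecE, ← pow_succ']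
    have hres_add : ∀ x y, res A b (x + y) = res A b x + mulVecE A y := by
      intro x y
      show mulVecE A (x + y) - b = (mulVecE A x - b) + mulVecE A y
      rw [mulVecE_add]
      abel
    -- the residual of `next` is the minimized objective
    have hrnext : res A b next = res A b (fp A b (u m)) +
        ∑ i : Fin (m+1), β i • (res A b (fp A b (u m)) - res A b (u (m - (i:ℕ)))) := by
      rw [hnext, hres_add, mulVecE_sum]
      congr 1
      refine Finset.sum_congr rfl fun i _ => ?_
      rw [mulVecE_smul, mulVecE_sub]
      congr 1
      show mulVecE A (fp A b (u m)) - mulVecE A (u (m - (i:ℕ)))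
          = (mulVecE A (fp A b (u m)) - b) - (mulVecE A (u (m - (i:ℕ))) - b)
      abel
    have hLHS : ‖res A b next‖ = ngObj A b m u m β := by
      unfold ngObj
      rw [hrnext]
    -- positivity of the condition number
    have hone : (0 : Matrix (Fin n) (Fin n) ℝ) ≠ 1 := by
      intro hcontra
      have := congrFun (congrFun hcontra i0) i0
      simp [Matrix.one_apply] at this
    have hUne : U ≠ 0 := fun h => hone (by rw [← huu, h, Matrix.zero_mul])
    have hUine : U⁻¹ ≠ 0 := fun h => hone (by rw [← huu, h, Matrix.mul_zero])
    have hcond : 0 < condNum U :=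
      lt_of_le_of_ne (mul_nonneg (opNorm_nonneg _) (opNorm_nonneg _))
        (Ne.symm (mul_ne_zero (opNorm_ne_zero U hUne) (opNorm_ne_zero _ hUine)))
    -- the spectrum of M is the set of diagonal entries
    have hspec : spectrum ℝ ((1 : Matrix (Fin n) (Fin n) ℝ) - A) = Set.range d := by
      rw [hM]; exact spectrum_conj_diagonal U d hU
    -- the main estimate: for every admissible element of the defining set of chiSp
    have hmain : ∀ t, (∃ p : Polynomial ℝ, p.natDegree ≤ m+1 ∧ p.eval 1 = 1 ∧
        t = sSup ((fun x => |p.eval x|) '' spectrum ℝ ((1 : Matrix (Fin n) (Fin n) ℝ) - A))) →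
        ‖res A b next‖ ≤ t * (condNum U * ‖res A b (u 0)‖) := by
      rintro t ⟨p, hdeg, hp1, rfl⟩
      set c : ℕ → ℝ := fun j => p.coeff j with hc
      have hdeg2 : p.natDegree < m + 2 := Nat.lt_succ_of_le hdeg
      have hsum : ∑ j ∈ Finset.range (m+2), c j = 1 := by
        have := Polynomial.eval_eq_sum_range' hdeg2 (1 : ℝ)
        rw [hp1] at this
        simpa using this.symm
      set w : ℕ → EuclideanSpace ℝ (Fin n) :=
        fun j => mulVecE (((1 : Matrix (Fin n) (Fin n) ℝ) - A) ^ j) (res A b (u 0)) with hw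
      set γ : Fin (m+1) → ℝ := fun i => -(c (m - (i:ℕ))) with hγ
      have hfpw : res A b (fp A b (u m)) = w (m+1) := by
        rw [hresfp, hres m le_rfl, mulVecE_mulVecE, ← pow_succ']
      have hw' : ∀ i : Fin (m+1), res A b (u (m - (i:ℕ))) = w (m - (i:ℕ)) :=
        fun i => hres _ (Nat.sub_le _ _)
      have hγobj : ngObj A b m u m γ = ‖∑ j ∈ Finset.range (m+2), c j • w j‖ := by
        unfold ngObj
        simp only [hfpw, hw']
        rw [keyid m c hsum w]
      -- rewrite the polynomial combination through the diagonalization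
      have hcomb : ∑ j ∈ Finset.range (m+2), c j • w j
          = mulVecE (U * Matrix.diagonal (fun i => p.eval (d i)) * U⁻¹) (res A b (u 0)) := by
        have e1 : ∑ j ∈ Finset.range (m+2), c j • w j
            = mulVecE (∑ j ∈ Finset.range (m+2), c j • ((1 : Matrix (Fin n) (Fin n) ℝ) - A) ^ j)
                (res A b (u 0)) := by
          rw [sum_mulVecE]
          exact Finset.sum_congr rfl fun j _ => (smul_mulVecE _ _ _).symm
        rw [e1]
        have e2 : ∀ j, ((1 : Matrix (Fin n) (Fin n) ℝ) - A) ^ j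
            = U * (Matrix.diagonal d) ^ j * U⁻¹ := fun j => by
          rw [hM]; exact conj_pow' U _ hU j
        have e5 : ∑ j ∈ Finset.range (m+2), c j • ((1 : Matrix (Fin n) (Fin n) ℝ) - A) ^ j
            = U * Matrix.diagonal (fun i => p.eval (d i)) * U⁻¹ := by
          have s1 : ∀ j, c j • ((1 : Matrix (Fin n) (Fin n) ℝ) - A) ^ j
              = U * (c j • (Matrix.diagonal d) ^ j) * U⁻¹ := fun j => by
            rw [e2 j, Matrix.mul_smul, Matrix.smul_mul]
          rw [Finset.sum_congr rfl fun j _ => s1 j, ← Finset.sum_mul, ← Finset.mul_sum,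
            sum_smul_diag_pow]
          have e6 : (fun i => ∑ j ∈ Finset.range (m+2), c j * d i ^ j)
              = fun i => p.eval (d i) :=
            funext fun i => (Polynomial.eval_eq_sum_range' hdeg2 (d i)).symm
          rw [e6]
        rw [e5]
      -- the sup bound
      set Cp := sSup ((fun x => |p.eval x|) '' spectrum ℝ ((1 : Matrix (Fin n) (Fin n) ℝ) - A))
        with hCp
      have himg : (fun x => |p.eval x|) '' spectrum ℝ ((1 : Matrix (Fin n) (Fin n) ℝ) - A)
          = Set.range (fun i => |p.eval (d i)|) := by
        rw [hspec, ← Set.range_comp]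
        rfl
      have hCple : ∀ i, |p.eval (d i)| ≤ Cp := by
        intro i
        rw [hCp, himg]
        exact le_csSup (Set.finite_range _).bddAbove ⟨i, rfl⟩
      have hCp0 : 0 ≤ Cp := le_trans (abs_nonneg _) (hCple i0)
      -- put everything together
      have hchain : ‖∑ j ∈ Finset.range (m+2), c j • w j‖
          ≤ Cp * (condNum U * ‖res A b (u 0)‖) := by
        rw [hcomb]
        have a1 : U * Matrix.diagonal (fun i => p.eval (d i)) * U⁻¹
            = U * (Matrix.diagonal (fun i => p.eval (d i)) * U⁻¹) := by
          rw [Matrix.mul_assoc]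
        rw [a1, ← mulVecE_mulVecE, ← mulVecE_mulVecE]
        calc ‖mulVecE U (mulVecE (Matrix.diagonal fun i => p.eval (d i)) (mulVecE U⁻¹ (res A b (u 0))))‖
            ≤ opNorm U * ‖mulVecE (Matrix.diagonal fun i => p.eval (d i)) (mulVecE U⁻¹ (res A b (u 0)))‖ :=
              norm_mulVecE_le _ _
          _ ≤ opNorm U * (Cp * ‖mulVecE U⁻¹ (res A b (u 0))‖) := by
              apply mul_le_mul_of_nonneg_left _ (opNorm_nonneg _)
              exact norm_mulVecE_diagonal_le _ Cp hCp0 hCple _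
          _ ≤ opNorm U * (Cp * (opNorm U⁻¹ * ‖res A b (u 0)‖)) := by
              apply mul_le_mul_of_nonneg_left _ (opNorm_nonneg _)
              exact mul_le_mul_of_nonneg_left (norm_mulVecE_le _ _) hCp0
          _ = Cp * (condNum U * ‖res A b (u 0)‖) := by
              unfold condNum; ring
      calc ‖res A b next‖ = ngObj A b m u m β := hLHS
        _ ≤ ngObj A b m u m γ := hβmin γ
        _ = ‖∑ j ∈ Finset.range (m+2), c j • w j‖ := hγobj
        _ ≤ Cp * (condNum U * ‖res A b (u 0)‖) := hchain
    -- now conclude via the infimum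
    have hSne : Set.Nonempty {t : ℝ | ∃ p : Polynomial ℝ, p.natDegree ≤ m+1 ∧ p.eval 1 = 1 ∧
        t = sSup ((fun x => |p.eval x|) '' spectrum ℝ ((1 : Matrix (Fin n) (Fin n) ℝ) - A))} := by
      exact ⟨_, 1, by simp, by simp, rfl⟩
    rcases eq_or_ne ‖res A b (u 0)‖ 0 with hr0 | hr0
    · obtain ⟨t, ht⟩ := hSne
      have := hmain t ht
      rw [hr0, mul_zero, mul_zero] at this
      rw [hr0, mul_zero]
      exact this
    · have hKpos : 0 < condNum U * ‖res A b (u 0)‖ :=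
        mul_pos hcond (lt_of_le_of_ne (norm_nonneg _) (Ne.symm hr0))
      have hdiv : ‖res A b next‖ / (condNum U * ‖res A b (u 0)‖)
          ≤ chiSp ((1 : Matrix (Fin n) (Fin n) ℝ) - A) (m+1) := by
        unfold chiSp
        exact le_csInf hSne fun t ht => (div_le_iff₀ hKpos).mpr (hmain t ht)
      have := (div_le_iff₀ hKpos).mp hdiv
      calc ‖res A b next‖
          ≤ chiSp ((1 : Matrix (Fin n) (Fin n) ℝ) - A) (m+1) * (condNum U * ‖res A b (u 0)‖) := this
        _ = chiSp ((1 : Matrix (Fin n) (Fin n) ℝ) - A) (m+1) * condNum U * ‖res A b (u 0)‖ := by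
            ring

end
end

section
/- Assume M is symmetric positive definite, M = U Λ Uᵀ with U orthogonal and Λ diagonal, all eigenvalues of M lie in an interval [a, b] with 0, 1 ∉ [a, b], and m < k. Starting from u₀, let u_j = q(u_{j−1}) for j = 1, …, k, and let u_{k+1} be produced by a single NGMRES(m) step from u_{k−m}, …, u_k. Then ‖(I − Λ) Uᵀ e_{k+1}‖ ≤ ε(a, b, m+1) · ‖(I − Λ) Uᵀ M e_k‖. -/
open Matrix Polynomial Set

noncomputable section

-- auxiliary lemmas

lemma mulVecE_apply {n : ℕ} (M : Matrix (Fin n) (Fin n) ℝ) (x : EuclideanSpace ℝ (Fin n))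
    (j : Fin n) : mulVecE M x j = ∑ l, M j l * x l := rfl

lemma mulVecE_comp {n : ℕ} (M N : Matrix (Fin n) (Fin n) ℝ) (x : EuclideanSpace ℝ (Fin n)) :
    mulVecE (M * N) x = mulVecE M (mulVecE N x) := by
  simp [mulVecE, Matrix.mulVec_mulVec]

lemma mulVecE_one {n : ℕ} (x : EuclideanSpace ℝ (Fin n)) : mulVecE 1 x = x := by
  ext j; simp [mulVecE, Matrix.one_mulVec]

lemma mulVecE_diagonal_apply {n : ℕ} (f : Fin n → ℝ) (x : EuclideanSpace ℝ (Fin n)) (j : Fin n) :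
    mulVecE (Matrix.diagonal f) x j = f j * x j := by
  show (Matrix.diagonal f).mulVec x j = f j * x j
  rw [Matrix.mulVec_diagonal]

lemma sum_apply_E {n : ℕ} {ι : Type*} (s : Finset ι) (f : ι → EuclideanSpace ℝ (Fin n))
    (j : Fin n) : (∑ i ∈ s, f i) j = ∑ i ∈ s, f i j := by
  classical
  induction s using Finset.induction with
  | empty => rfl
  | insert _ _ h ih => rw [Finset.sum_insert h, Finset.sum_insert h, PiLp.add_apply, ih]

lemma norm_sq_eq {n : ℕ} (x : EuclideanSpace ℝ (Fin n)) :
    ‖x‖ = Real.sqrt (∑ i, (x i)^2) := by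
  rw [EuclideanSpace.norm_eq]
  congr 1
  apply Finset.sum_congr rfl
  intro i _
  rw [Real.norm_eq_abs, sq_abs]

lemma norm_le_of_componentwise {n : ℕ} (x y : EuclideanSpace ℝ (Fin n)) (C : ℝ) (hC : 0 ≤ C)
    (h : ∀ i, |x i| ≤ C * |y i|) : ‖x‖ ≤ C * ‖y‖ := by
  rw [norm_sq_eq, norm_sq_eq]
  have h2 : ∀ i : Fin n, (x i)^2 ≤ C^2 * (y i)^2 := by
    intro i
    have := h i
    nlinarith [abs_nonneg (x i), abs_nonneg (y i), sq_abs (x i), sq_abs (y i)]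
  calc Real.sqrt (∑ i, (x i)^2) ≤ Real.sqrt (∑ i, C^2 * (y i)^2) := by
        apply Real.sqrt_le_sqrt
        exact Finset.sum_le_sum fun i _ => h2 i
    _ = C * Real.sqrt (∑ i, (y i)^2) := by
        rw [← Finset.mul_sum, Real.sqrt_mul (sq_nonneg C), Real.sqrt_sq hC]

lemma norm_mulVecE_orth {n : ℕ} (U : Matrix (Fin n) (Fin n) ℝ) (hU : U * Uᵀ = 1)
    (x : EuclideanSpace ℝ (Fin n)) : ‖mulVecE Uᵀ x‖ = ‖x‖ := by
  rw [norm_sq_eq, norm_sq_eq]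
  congr 1
  have hdp : ∀ (y : EuclideanSpace ℝ (Fin n)), (∑ i, (y i)^2) = y ⬝ᵥ (y : Fin n → ℝ) := by
    intro y; simp [dotProduct, sq]
  rw [hdp, hdp]
  show (Uᵀ *ᵥ x) ⬝ᵥ (Uᵀ *ᵥ x) = x ⬝ᵥ x
  rw [Matrix.dotProduct_mulVec, Matrix.vecMul_transpose, Matrix.mulVec_mulVec, hU,
    Matrix.one_mulVec]

lemma poly_key (m : ℕ) (p : Polynomial ℝ) (hdeg : p.natDegree ≤ m+1) (x : ℝ) (hx : x ≠ 0) :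
    x^(m+1) * p.eval x⁻¹ = ∑ j ∈ Finset.range (m+2), p.coeff j * x^(m+1-j) := by
  rw [Polynomial.eval_eq_sum_range' (Nat.lt_succ_of_le hdeg), Finset.mul_sum]
  apply Finset.sum_congr rfl
  intro j hj
  have hj' : j ≤ m+1 := Nat.lt_succ_iff.mp (Finset.mem_range.mp hj)
  have hpow : x^(m+1-j) * x^j = x^(m+1) := by rw [← pow_add]; congr 1; omega
  rw [← hpow, inv_pow]
  have hxj : x^j ≠ 0 := pow_ne_zero _ hx
  calc x ^ (m + 1 - j) * x ^ j * (p.coeff j * (x ^ j)⁻¹)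
      = x ^ (m + 1 - j) * p.coeff j * (x ^ j * (x ^ j)⁻¹) := by ring
    _ = _ := by rw [mul_inv_cancel₀ hxj]; ring

lemma poly_eval_one (m : ℕ) (p : Polynomial ℝ) (hdeg : p.natDegree ≤ m+1) :
    p.eval 1 = ∑ j ∈ Finset.range (m+2), p.coeff j := by
  rw [Polynomial.eval_eq_sum_range' (Nat.lt_succ_of_le hdeg)]
  simp

lemma inv_anti_same_sign (x y : ℝ) (hxy : x ≤ y) (hprod : 0 < x * y) : 1/y ≤ 1/x := by
  have hx0 : x ≠ 0 := by rintro rfl; simp at hprod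
  have hy0 : y ≠ 0 := by rintro rfl; simp at hprod
  have key : 1/x - 1/y = (1*y - x*1)/(x*y) := div_sub_div 1 1 hx0 hy0
  have : 0 ≤ (1*y - x*1)/(x*y) := div_nonneg (by linarith) hprod.le
  linarith [key ▸ this]

lemma le_sInf_mul (L R : ℝ) (S : Set ℝ) (hne : S.Nonempty) (hR : 0 ≤ R)
    (h : ∀ t ∈ S, L ≤ t * R) : L ≤ sInf S * R := by
  rcases eq_or_lt_of_le hR with h0 | h0
  · obtain ⟨t, ht⟩ := hne
    have := h t ht
    rw [← h0] at this ⊢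
    simpa using this
  · have hub : L / R ≤ sInf S := le_csInf hne fun t ht => (div_le_iff₀ h0).2 (h t ht)
    have := mul_le_mul_of_nonneg_right hub hR
    rwa [div_mul_cancel₀ _ (ne_of_gt h0)] at this

/-- Combination vector: `E γ = (q(u_k)-u*) + Σ γ_i ((q(u_k)-u*) - (u_{k-i}-u*))`. -/
def Ecomb {n m : ℕ} (A : Matrix (Fin n) (Fin n) ℝ) (b : EuclideanSpace ℝ (Fin n))
    (u : ℕ → EuclideanSpace ℝ (Fin n)) (ustar : EuclideanSpace ℝ (Fin n)) (k : ℕ)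
    (γ : Fin (m+1) → ℝ) : EuclideanSpace ℝ (Fin n) :=
  (fp A b (u k) - ustar) +
    ∑ i : Fin (m+1), γ i • ((fp A b (u k) - ustar) - (u (k - (i : ℕ)) - ustar))

/-- one-step NGMRES(m) error bound in the SPD case,
`‖(I - Λ) Uᵀ e_{k+1}‖ ≤ ε(a, b, m+1) · ‖(I - Λ) Uᵀ M e_k‖`. -/
theorem stmt_4 {n m k : ℕ} (A U : Matrix (Fin n) (Fin n) ℝ) (d : Fin n → ℝ)
    (hA : IsUnit A) (hPD : ((1 : Matrix (Fin n) (Fin n) ℝ) - A).PosDef)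
    (hU : Uᵀ * U = 1)
    (hM : (1 : Matrix (Fin n) (Fin n) ℝ) - A = U * Matrix.diagonal d * Uᵀ)
    (a c : ℝ) (hac : a < c)
    (h0 : (0 : ℝ) ∉ Set.Icc a c) (h1 : (1 : ℝ) ∉ Set.Icc a c)
    (hd : ∀ i, d i ∈ Set.Icc a c)
    (b ustar : EuclideanSpace ℝ (Fin n)) (hustar : mulVecE A ustar = b)
    (u : ℕ → EuclideanSpace ℝ (Fin n))
    (hfp : ∀ j, 1 ≤ j → j ≤ k → u j = fp A b (u (j-1)))
    (hmk : m < k) (next : EuclideanSpace ℝ (Fin n))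
    (hstep : NGMRESStep A b m u k next) :
    ‖mulVecE ((1 - Matrix.diagonal d) * Uᵀ) (next - ustar)‖ ≤
      eps a c (m+1) *
        ‖mulVecE ((1 - Matrix.diagonal d) * Uᵀ * (1 - A)) (u k - ustar)‖ := by
  -- sign facts
  have hsign : 0 < a ∨ c < 0 := by
    by_contra hcon
    push_neg at hcon
    exact h0 ⟨hcon.1, hcon.2⟩
  have hdne : ∀ j : Fin n, d j ≠ 0 := by
    intro j
    obtain ⟨hj1, hj2⟩ := hd j
    rcases hsign with h | h
    · exact ne_of_gt (lt_of_lt_of_le h hj1)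
    · exact ne_of_lt (lt_of_le_of_lt hj2 h)
  have hmem : ∀ j : Fin n, (d j)⁻¹ ∈ Set.Icc (1/c) (1/a) := by
    intro j
    obtain ⟨hj1, hj2⟩ := hd j
    rw [Set.mem_Icc, ← one_div]
    rcases hsign with h | h
    · have hdj : 0 < d j := lt_of_lt_of_le h hj1
      exact ⟨inv_anti_same_sign (d j) c hj2 (mul_pos hdj (lt_of_lt_of_le h (le_of_lt hac))),
        inv_anti_same_sign a (d j) hj1 (mul_pos h hdj)⟩
    · have hdj : d j < 0 := lt_of_le_of_lt hj2 h
      have ha0 : a < 0 := lt_trans hac h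
      exact ⟨inv_anti_same_sign (d j) c hj2 (mul_pos_of_neg_of_neg hdj h),
        inv_anti_same_sign a (d j) hj1 (mul_pos_of_neg_of_neg ha0 hdj)⟩
  have hca : 1/c ≤ 1/a := by
    rcases hsign with h | h
    · exact inv_anti_same_sign a c hac.le (mul_pos h (lt_of_lt_of_le h hac.le))
    · exact inv_anti_same_sign a c hac.le (mul_pos_of_neg_of_neg (lt_trans hac h) h)
  -- basic setup
  set M : Matrix (Fin n) (Fin n) ℝ := 1 - A with hMdef
  have hU' : U * Uᵀ = 1 := mul_eq_one_comm.mp hU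
  have hbA : b = mulVecE A ustar := hustar.symm
  have hfpe : ∀ x : EuclideanSpace ℝ (Fin n),
      fp A b x - ustar = mulVecE M (x - ustar) := by
    intro x
    rw [mulVecE_sub]
    have hMu : mulVecE M ustar = ustar - b := by
      rw [hMdef]
      have : mulVecE (1 - A) ustar = mulVecE 1 ustar - mulVecE A ustar := by
        ext j
        simp [mulVecE_apply, Matrix.sub_apply, sub_mul, Finset.sum_sub_distrib]
      rw [this, mulVecE_one, hustar]
    rw [hMu]
    show mulVecE (1 - A) x + b - ustar = mulVecE M x - (ustar - b)
    rw [← hMdef]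
    abel
  have hres : ∀ x : EuclideanSpace ℝ (Fin n), res A b x = mulVecE A (x - ustar) := by
    intro x
    rw [mulVecE_sub]
    show mulVecE A x - b = mulVecE A x - mulVecE A ustar
    rw [hustar]
  -- iteration
  have hiter : ∀ t, t ≤ m → u (k - m + t) - ustar = mulVecE (M^t) (u (k-m) - ustar) := by
    intro t
    induction t with
    | zero => intro _; simp [pow_zero, mulVecE_one]
    | succ t ih =>
      intro ht
      have h1 : u (k-m+t+1) = fp A b (u (k-m+t)) := by
        have := hfp (k-m+t+1) (by omega) (by omega)
        simpa using this
      have h2 : k - m + (t+1) = k-m+t+1 := by omega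
      rw [h2, h1, hfpe, ih (by omega), ← mulVecE_comp]
      congr 1
      rw [← pow_succ']
  have hfpk : fp A b (u k) - ustar = mulVecE (M^(m+1)) (u (k-m) - ustar) := by
    rw [hfpe]
    have h2 : k = k - m + m := by omega
    rw [show u k - ustar = u (k-m+m) - ustar by rw [← h2], hiter m le_rfl, ← mulVecE_comp]
    congr 1
    rw [← pow_succ']
  have hek : ∀ i : Fin (m+1), u (k - (i:ℕ)) - ustar
      = mulVecE (M^(m - (i:ℕ))) (u (k-m) - ustar) := by
    intro i
    have hi : (i:ℕ) ≤ m := Nat.lt_succ_iff.mp i.isLt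
    have h1 : k - (i:ℕ) = k - m + (m - (i:ℕ)) := by omega
    rw [h1]
    exact hiter _ (by omega)
  -- spectral facts
  have hUM : Uᵀ * M = Matrix.diagonal d * Uᵀ := by
    rw [hM, ← Matrix.mul_assoc, ← Matrix.mul_assoc, hU, Matrix.one_mul]
  have hUMt : ∀ t, Uᵀ * M^t = Matrix.diagonal (fun j => d j ^ t) * Uᵀ := by
    intro t
    induction t with
    | zero => simp
    | succ t ih =>
      calc Uᵀ * M^(t+1) = (Uᵀ * M^t) * M := by rw [pow_succ, Matrix.mul_assoc]
        _ = Matrix.diagonal (fun j => d j^t) * (Matrix.diagonal d * Uᵀ) := by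
            rw [ih, Matrix.mul_assoc, hUM]
        _ = Matrix.diagonal (fun j => d j^(t+1)) * Uᵀ := by
            rw [← Matrix.mul_assoc, Matrix.diagonal_mul_diagonal]
            congr 1
  have hcomp : ∀ (t : ℕ) (x : EuclideanSpace ℝ (Fin n)) (j : Fin n),
      mulVecE Uᵀ (mulVecE (M^t) x) j = d j ^ t * mulVecE Uᵀ x j := by
    intro t x j
    rw [← mulVecE_comp, hUMt t, mulVecE_comp, mulVecE_diagonal_apply]
  -- component formula for E γ
  have hEU : ∀ (γ : Fin (m+1) → ℝ) (j : Fin n),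
      mulVecE Uᵀ (Ecomb A b u ustar k γ) j
        = ((1 + ∑ i, γ i) * d j^(m+1) - ∑ i : Fin (m+1), γ i * d j^(m - (i:ℕ)))
            * mulVecE Uᵀ (u (k-m) - ustar) j := by
    intro γ j
    unfold Ecomb
    rw [hfpk]
    simp only [hek]
    generalize u (k - m) - ustar = w
    set v := mulVecE Uᵀ w j with hv
    rw [mulVecE_add, mulVecE_sum, PiLp.add_apply, sum_apply_E]
    simp only [mulVecE_smul, mulVecE_sub, PiLp.smul_apply, PiLp.sub_apply, smul_eq_mul, hcomp]
    have expand : ((1 + ∑ i, γ i) * d j^(m+1) - ∑ i : Fin (m+1), γ i * d j^(m - (i:ℕ))) * v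
        = d j^(m+1) * v + ((∑ i, γ i) * (d j^(m+1) * v)
            - (∑ i : Fin (m+1), γ i * d j^(m - (i:ℕ))) * v) := by ring
    rw [expand]
    congr 1
    calc ∑ i : Fin (m+1), γ i * (d j^(m+1) * v - d j^(m - (i:ℕ)) * v)
        = ∑ i : Fin (m+1), (γ i * (d j^(m+1) * v) - (γ i * d j^(m - (i:ℕ))) * v) := by
          apply Finset.sum_congr rfl
          intro i _
          ring
      _ = (∑ i, γ i) * (d j^(m+1) * v) - (∑ i : Fin (m+1), γ i * d j^(m - (i:ℕ))) * v := by
          rw [Finset.sum_sub_distrib, ← Finset.sum_mul, ← Finset.sum_mul]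
  -- ngObj identity
  have hng : ∀ γ : Fin (m+1) → ℝ, ngObj A b m u k γ = ‖mulVecE A (Ecomb A b u ustar k γ)‖ := by
    intro γ
    unfold ngObj Ecomb
    congr 1
    rw [mulVecE_add, mulVecE_sum]
    congr 1
    · rw [hres]
    · apply Finset.sum_congr rfl
      intro i _
      rw [mulVecE_smul, mulVecE_sub, hres, hres]
  -- norm conversion
  have hAeq : (1 - Matrix.diagonal d) * Uᵀ = Uᵀ * A := by
    have h2 : A = 1 - M := by rw [hMdef, sub_sub_cancel]
    rw [h2, Matrix.mul_sub, Matrix.mul_one, hUM, Matrix.sub_mul, Matrix.one_mul]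
  have hnorm : ∀ x : EuclideanSpace ℝ (Fin n),
      ‖mulVecE ((1 - Matrix.diagonal d) * Uᵀ) x‖ = ‖mulVecE A x‖ := by
    intro x
    rw [hAeq, mulVecE_comp, norm_mulVecE_orth U hU']
  -- diagonal component
  have hdiag : ∀ (x : EuclideanSpace ℝ (Fin n)) (j : Fin n),
      mulVecE ((1 - Matrix.diagonal d) * Uᵀ) x j = (1 - d j) * mulVecE Uᵀ x j := by
    intro x j
    rw [mulVecE_comp]
    have h2 : (1 : Matrix (Fin n) (Fin n) ℝ) - Matrix.diagonal d
        = Matrix.diagonal (fun i => 1 - d i) := by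
      rw [← Matrix.diagonal_one, Matrix.diagonal_sub]
    rw [h2, mulVecE_diagonal_apply]
  -- RHS components
  have hRHS : ∀ j : Fin n,
      mulVecE ((1 - Matrix.diagonal d) * Uᵀ * M) (u k - ustar) j
        = (1 - d j) * (d j^(m+1) * mulVecE Uᵀ (u (k-m) - ustar) j) := by
    intro j
    rw [mulVecE_comp, hdiag]
    congr 1
    have h2 : mulVecE M (u k - ustar) = mulVecE (M^(m+1)) (u (k-m) - ustar) := by
      rw [← hfpe, hfpk]
    rw [h2, hcomp]
  -- extract β
  obtain ⟨β, hmin, hnexteq⟩ := hstep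
  have hnext : next - ustar = Ecomb A b u ustar k β := by
    rw [hnexteq]
    unfold Ecomb
    simp only [sub_sub_sub_cancel_right]
    abel
  rw [hnext]
  -- main bound for each admissible polynomial
  have key : ∀ p : Polynomial ℝ, p.natDegree ≤ m+1 → p.eval 1 = 1 →
      ‖mulVecE ((1 - Matrix.diagonal d) * Uᵀ) (Ecomb A b u ustar k β)‖ ≤
        (sSup ((fun x => |p.eval x|) '' Set.Icc (1/c) (1/a))) *
          ‖mulVecE ((1 - Matrix.diagonal d) * Uᵀ * M) (u k - ustar)‖ := by
    intro p hdeg hp1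
    set Sp := sSup ((fun x => |p.eval x|) '' Set.Icc (1/c) (1/a)) with hSpdef
    have hbdd : BddAbove ((fun x => |p.eval x|) '' Set.Icc (1/c) (1/a)) :=
      IsCompact.bddAbove_image isCompact_Icc
        ((continuous_abs.comp p.continuous).continuousOn)
    have hub : ∀ x ∈ Set.Icc (1/c) (1/a), |p.eval x| ≤ Sp := fun x hx =>
      le_csSup hbdd (Set.mem_image_of_mem _ hx)
    have hSp0 : 0 ≤ Sp :=
      le_trans (abs_nonneg _) (hub (1/c) ⟨le_refl _, hca⟩)
    set γ : Fin (m+1) → ℝ := fun i => -(p.coeff ((i:ℕ)+1)) with hγ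
    -- scalar identity
    have hscal : ∀ j : Fin n,
        (1 + ∑ i, γ i) * d j^(m+1) - ∑ i : Fin (m+1), γ i * d j^(m - (i:ℕ))
          = d j^(m+1) * p.eval (d j)⁻¹ := by
      intro j
      rw [poly_key m p hdeg (d j) (hdne j), Finset.sum_range_succ']
      have hc0 : p.coeff 0 = 1 - ∑ i ∈ Finset.range (m+1), p.coeff (i+1) := by
        have he := poly_eval_one m p hdeg
        rw [hp1, Finset.sum_range_succ'] at he
        linarith
      have hs1 : (∑ i, γ i) = ∑ i ∈ Finset.range (m+1), -(p.coeff (i+1)) := by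
        rw [hγ]
        exact Fin.sum_univ_eq_sum_range (fun i => -(p.coeff (i+1))) (m+1)
      have hs2 : (∑ i : Fin (m+1), γ i * d j^(m - (i:ℕ)))
          = ∑ i ∈ Finset.range (m+1), -(p.coeff (i+1)) * d j^(m - i) := by
        rw [hγ]
        exact Fin.sum_univ_eq_sum_range (fun i => -(p.coeff (i+1)) * d j^(m - i)) (m+1)
      rw [hs1, hs2, hc0]
      have hexp : ∀ i ∈ Finset.range (m+1),
          p.coeff (i+1) * d j^(m+1-(i+1)) = p.coeff (i+1) * d j^(m-i) := by
        intro i _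
        congr 2
        omega
      rw [Finset.sum_congr rfl hexp]
      simp only [neg_mul, Finset.sum_neg_distrib, Nat.sub_zero]
      ring
    -- componentwise bound
    have hcompb : ∀ j : Fin n,
        |mulVecE ((1 - Matrix.diagonal d) * Uᵀ) (Ecomb A b u ustar k γ) j|
          ≤ Sp * |mulVecE ((1 - Matrix.diagonal d) * Uᵀ * M) (u k - ustar) j| := by
      intro j
      rw [hdiag, hEU, hRHS, hscal]
      have hpj : |p.eval (d j)⁻¹| ≤ Sp := hub _ (hmem j)
      set v := mulVecE Uᵀ (u (k-m) - ustar) j with hvdef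
      calc |(1 - d j) * (d j^(m+1) * p.eval (d j)⁻¹ * v)|
          = |p.eval (d j)⁻¹| * |(1 - d j) * (d j^(m+1) * v)| := by
            rw [← abs_mul]
            congr 1
            ring
        _ ≤ Sp * |(1 - d j) * (d j^(m+1) * v)| :=
            mul_le_mul_of_nonneg_right hpj (abs_nonneg _)
    -- minimality
    have h5 : ‖mulVecE ((1 - Matrix.diagonal d) * Uᵀ) (Ecomb A b u ustar k β)‖
        ≤ ‖mulVecE ((1 - Matrix.diagonal d) * Uᵀ) (Ecomb A b u ustar k γ)‖ := by
      rw [hnorm, hnorm, ← hng, ← hng]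
      exact hmin γ
    exact le_trans h5 (norm_le_of_componentwise _ _ Sp hSp0 hcompb)
  -- conclude via sInf
  unfold eps
  apply le_sInf_mul _ _ _ ?_ (norm_nonneg _)
  · rintro t ⟨p, hdeg, hp1, rfl⟩
    exact key p hdeg hp1
  · exact ⟨_, ⟨1, by simp, by simp, rfl⟩⟩

end
end

section
/- Let (u_k) be the aNGMRES(∞, p) iterates from u₀ and (u_k^G) the full GMRES iterates from the same u₀. Then u_{jp} = u_{jp}^G for all j = 1, …, j*, whenever j* p ≤ ν(A, r₀) and j* p ≤ η^G. -/
open Matrix Polynomial Set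

noncomputable section

namespace StmtAux
variable {n : ℕ} (A : Matrix (Fin n) (Fin n) ℝ) (b : EuclideanSpace ℝ (Fin n))

abbrev E (n : ℕ) := EuclideanSpace ℝ (Fin n)

/-- `mulVecE A` as a linear map. -/
def Amap : E n →ₗ[ℝ] E n where
  toFun := mulVecE A
  map_add' x y := by
    show WithLp.toLp 2 (A.mulVec (x + y)) = WithLp.toLp 2 (A.mulVec x) + WithLp.toLp 2 (A.mulVec y)
    rw [A.mulVec_add]; rfl
  map_smul' c x := by
    show WithLp.toLp 2 (A.mulVec (c • x)) = c • WithLp.toLp 2 (A.mulVec x)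
    rw [A.mulVec_smul]; rfl


lemma Amap_apply (v : E n) : Amap A v = mulVecE A v := rfl

lemma mulVecE_add (x y : E n) : mulVecE A (x + y) = mulVecE A x + mulVecE A y :=
  (Amap A).map_add x y

lemma mulVecE_smul (c : ℝ) (x : E n) : mulVecE A (c • x) = c • mulVecE A x :=
  (Amap A).map_smul c x

lemma mulVecE_sub (x y : E n) : mulVecE A (x - y) = mulVecE A x - mulVecE A y :=
  (Amap A).map_sub x y

lemma mulVecE_one (x : E n) : mulVecE 1 x = x := by
  show WithLp.toLp 2 ((1 : Matrix (Fin n) (Fin n) ℝ).mulVec x) = x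
  rw [Matrix.one_mulVec]

lemma mulVecE_matsub (B : Matrix (Fin n) (Fin n) ℝ) (x : E n) :
    mulVecE (A - B) x = mulVecE A x - mulVecE B x := by
  show WithLp.toLp 2 ((A - B).mulVec x) = WithLp.toLp 2 (A.mulVec x) - WithLp.toLp 2 (B.mulVec x)
  rw [Matrix.sub_mulVec]; rfl

lemma fp_eq (x : E n) : fp A b x = x - res A b x := by
  unfold fp res
  rw [mulVecE_matsub, mulVecE_one]
  abel

lemma res_add (x v : E n) : res A b (x + v) = res A b x + mulVecE A v := by
  unfold res
  rw [mulVecE_add]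
  abel

lemma res_sub (x v : E n) : res A b (x - v) = res A b x - mulVecE A v := by
  unfold res
  rw [mulVecE_sub]
  abel

lemma mulVecE_sub_eq_res_sub (x y : E n) :
    mulVecE A (x - y) = res A b x - res A b y := by
  unfold res
  rw [mulVecE_sub]
  abel

lemma res_eq (u0 x : E n) : res A b x = mulVecE A (x - u0) + res A b u0 := by
  unfold res
  rw [mulVecE_sub]
  abel

lemma mulVecE_inj (hA : IsUnit A) {x y : E n} (h : mulVecE A x = mulVecE A y) : x = y :=
  by
  have h' : A.mulVec x = A.mulVec y := congrArg WithLp.ofLp h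
  have := (Matrix.mulVec_injective_iff_isUnit.mpr hA) h'
  exact congrArg (WithLp.toLp 2) this


section Krylov
variable (r : E n)

lemma pow_mem_Krylov {i k : ℕ} (h : i < k) : mulVecE (A ^ i) r ∈ Krylov A r k :=
  Submodule.subset_span ⟨⟨i, h⟩, rfl⟩

lemma self_mem_Krylov {k : ℕ} (h : 1 ≤ k) : r ∈ Krylov A r k := by
  have := pow_mem_Krylov A r h
  rwa [pow_zero, mulVecE_one] at this

lemma Krylov_mono {k k' : ℕ} (h : k ≤ k') : Krylov A r k ≤ Krylov A r k' := by
  apply Submodule.span_mono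
  rintro x ⟨i, rfl⟩
  exact ⟨⟨(i : ℕ), lt_of_lt_of_le i.isLt h⟩, rfl⟩

lemma Krylov_zero : Krylov A r 0 = ⊥ := by
  rw [show Krylov A r 0 = Submodule.span ℝ (Set.range fun i : Fin 0 => mulVecE (A ^ (i : ℕ)) r) from rfl,
    Set.range_eq_empty, Submodule.span_empty]

/-- span of a `Fin (k+1)`-indexed family splits off the last vector. -/
lemma span_range_fin_succ {k : ℕ} (f : ℕ → E n) :
    Submodule.span ℝ (Set.range fun i : Fin (k+1) => f (i : ℕ)) =
      Submodule.span ℝ (Set.range fun i : Fin k => f (i : ℕ)) ⊔ (ℝ ∙ f k) := by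
  apply le_antisymm
  · rw [Submodule.span_le]
    rintro x ⟨i, rfl⟩
    rcases lt_or_eq_of_le (Nat.lt_succ_iff.mp i.isLt) with h | h
    · exact Submodule.mem_sup_left (Submodule.subset_span ⟨⟨(i:ℕ), h⟩, rfl⟩)
    · show f (i : ℕ) ∈ _
      rw [h]
      exact Submodule.mem_sup_right (Submodule.mem_span_singleton_self _)
  · apply sup_le
    · apply Submodule.span_mono
      rintro x ⟨i, rfl⟩
      exact ⟨⟨(i:ℕ), Nat.lt_succ_of_lt i.isLt⟩, rfl⟩
    · rw [Submodule.span_singleton_le_iff_mem]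
      exact Submodule.subset_span ⟨⟨k, Nat.lt_succ_self k⟩, rfl⟩

lemma Krylov_succ (k : ℕ) :
    Krylov A r (k+1) = Krylov A r k ⊔ (ℝ ∙ mulVecE (A ^ k) r) :=
  span_range_fin_succ (fun i => mulVecE (A ^ i) r)

lemma mulVecE_mem_Krylov_succ {k : ℕ} {v : E n} (hv : v ∈ Krylov A r k) :
    mulVecE A v ∈ Krylov A r (k+1) := by
  have : Krylov A r k ≤ (Krylov A r (k+1)).comap (Amap A) := by
    rw [show Krylov A r k = Submodule.span ℝ (Set.range fun i : Fin k => mulVecE (A ^ (i : ℕ)) r) from rfl, Submodule.span_le]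
    rintro x ⟨i, rfl⟩
    simp only [Set.mem_preimage, SetLike.mem_coe, Submodule.mem_comap]
    have : Amap A (mulVecE (A ^ (i:ℕ)) r) = mulVecE (A ^ ((i:ℕ)+1)) r := by
      show mulVecE A (mulVecE (A ^ (i:ℕ)) r) = mulVecE (A ^ ((i:ℕ)+1)) r
      show WithLp.toLp 2 (A.mulVec ((A ^ (i:ℕ)).mulVec r)) = WithLp.toLp 2 ((A ^ ((i:ℕ)+1)).mulVec r)
      rw [Matrix.mulVec_mulVec, pow_succ']
    rw [this]
    exact pow_mem_Krylov A r (Nat.succ_lt_succ i.isLt)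
  exact this hv


variable {A r} {nu : ℕ}

lemma finrank_Krylov (hnu : Module.finrank ℝ (Krylov A r nu) = nu)
    {l : ℕ} (hl : l ≤ nu) : Module.finrank ℝ (Krylov A r l) = l := by
  have hLI : LinearIndependent ℝ (fun i : Fin nu => mulVecE (A ^ (i : ℕ)) r) := by
    rw [linearIndependent_iff_card_eq_finrank_span]
    rw [Fintype.card_fin]
    exact hnu.symm
  have hLI' : LinearIndependent ℝ (fun i : Fin l => mulVecE (A ^ (i : ℕ)) r) := by
    have := hLI.comp (Fin.castLE hl) (Fin.castLE_injective hl)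
    exact this
  have := finrank_span_eq_card hLI'
  rw [Fintype.card_fin] at this
  exact this

/-- Dimension bump lemma. -/
lemma Krylov_sup_singleton (hnu : Module.finrank ℝ (Krylov A r nu) = nu)
    {l : ℕ} (hl : l + 1 ≤ nu) {v : E n} (hv : v ∈ Krylov A r (l+1))
    (hv' : v ∉ Krylov A r l) :
    Krylov A r l ⊔ (ℝ ∙ v) = Krylov A r (l+1) := by
  have hle : Krylov A r l ⊔ (ℝ ∙ v) ≤ Krylov A r (l+1) := by
    apply sup_le (Krylov_mono A r (Nat.le_succ l))
    rw [Submodule.span_singleton_le_iff_mem]; exact hv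
  apply Submodule.eq_of_le_of_finrank_le hle
  have hlt : Krylov A r l < Krylov A r l ⊔ (ℝ ∙ v) := by
    apply lt_of_le_of_ne le_sup_left
    intro hEq
    apply hv'
    have hmem : v ∈ Krylov A r l ⊔ (ℝ ∙ v) :=
      Submodule.mem_sup_right (Submodule.mem_span_singleton_self v)
    rwa [← hEq] at hmem
  have h1 : Module.finrank ℝ (Krylov A r l) <
      Module.finrank ℝ ↥(Krylov A r l ⊔ (ℝ ∙ v)) :=
    Submodule.finrank_lt_finrank_of_lt hlt
  rw [finrank_Krylov hnu (le_of_lt (Nat.lt_of_succ_le hl))] at h1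
  rw [finrank_Krylov hnu hl]
  omega


lemma mulVecE_pow_succ (t : ℕ) (x : E n) :
    mulVecE (A ^ (t+1)) x = mulVecE A (mulVecE (A ^ t) x) := by
  show WithLp.toLp 2 ((A ^ (t+1)).mulVec x) = WithLp.toLp 2 (A.mulVec ((A ^ t).mulVec x))
  rw [Matrix.mulVec_mulVec, pow_succ']

/-- If `v ∈ K_{l+1} \ K_l` then `A v ∈ K_{l+2} \ K_{l+1}` (provided `l+2 ≤ ν`). -/
lemma step_lemma (hnu : Module.finrank ℝ (Krylov A r nu) = nu)
    {l : ℕ} (hl : l + 2 ≤ nu) {v : E n} (hv : v ∈ Krylov A r (l+1))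
    (hv' : v ∉ Krylov A r l) :
    mulVecE A v ∈ Krylov A r (l+2) ∧ mulVecE A v ∉ Krylov A r (l+1) := by
  refine ⟨mulVecE_mem_Krylov_succ A r hv, ?_⟩
  intro hAv
  have hU : Krylov A r l ⊔ (ℝ ∙ v) = Krylov A r (l+1) :=
    Krylov_sup_singleton hnu (by omega) hv hv'
  -- invariance of K_{l+1} under A
  have hinv : ∀ w ∈ Krylov A r (l+1), mulVecE A w ∈ Krylov A r (l+1) := by
    intro w hw
    rw [← hU] at hw
    rcases Submodule.mem_sup.mp hw with ⟨y, hy, z, hz, rfl⟩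
    rw [mulVecE_add]
    apply Submodule.add_mem
    · exact mulVecE_mem_Krylov_succ A r hy
    · rcases Submodule.mem_span_singleton.mp hz with ⟨c, rfl⟩
      rw [mulVecE_smul]
      exact Submodule.smul_mem _ c hAv
  -- hence all powers of A applied to r stay in K_{l+1}
  have hpow : ∀ t : ℕ, mulVecE (A ^ t) r ∈ Krylov A r (l+1) := by
    intro t
    induction t with
    | zero =>
      rw [pow_zero, mulVecE_one]
      exact self_mem_Krylov A r (Nat.succ_le_succ (Nat.zero_le l))
    | succ t ih =>
      rw [mulVecE_pow_succ]
      exact hinv _ ih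
  have hle : Krylov A r (l+2) ≤ Krylov A r (l+1) := by
    rw [show Krylov A r (l+2) = Submodule.span ℝ
        (Set.range fun i : Fin (l+2) => mulVecE (A ^ (i : ℕ)) r) from rfl, Submodule.span_le]
    rintro x ⟨i, rfl⟩
    exact hpow (i : ℕ)
  have := Submodule.finrank_mono (R := ℝ) hle
  rw [finrank_Krylov hnu hl, finrank_Krylov hnu (by omega)] at this
  omega

end Krylov

lemma span_singleton_neg' (v : E n) :
    (Submodule.span ℝ {-v} : Submodule ℝ (E n)) = Submodule.span ℝ {v} := by
  apply le_antisymm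
  · rw [Submodule.span_singleton_le_iff_mem]
    exact Submodule.neg_mem _ (Submodule.mem_span_singleton_self v)
  · rw [Submodule.span_singleton_le_iff_mem]
    have h : (-v) ∈ (Submodule.span ℝ {-v} : Submodule ℝ (E n)) :=
      Submodule.mem_span_singleton_self (-v)
    have := Submodule.neg_mem _ h
    rwa [neg_neg] at this

/-- Uniqueness of the residual-norm minimizer over an affine subspace `u0 + K`. -/
lemma min_unique (hA : IsUnit A) (u0 : E n) (K : Submodule ℝ (E n)) {x y : E n}
    (hx : x - u0 ∈ K) (hy : y - u0 ∈ K)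
    (hxm : ∀ w ∈ K, ‖res A b x‖ ≤ ‖res A b (u0 + w)‖)
    (hym : ∀ w ∈ K, ‖res A b y‖ ≤ ‖res A b (u0 + w)‖) : x = y := by
  set a := res A b x with ha
  set c := res A b y with hc
  set w : E n := (1/2 : ℝ) • ((x - u0) + (y - u0)) with hw
  have hwK : w ∈ K := Submodule.smul_mem _ _ (Submodule.add_mem _ hx hy)
  have hres : res A b (u0 + w) = (1/2 : ℝ) • (a + c) := by
    rw [res_add A b u0 w, hw, mulVecE_smul, mulVecE_add,
        mulVecE_sub_eq_res_sub A b x u0, mulVecE_sub_eq_res_sub A b y u0, ← ha, ← hc]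
    module
  have hna : ‖a‖ ≤ (1/2 : ℝ) * ‖a + c‖ := by
    have := hxm w hwK
    rwa [hres, norm_smul, Real.norm_eq_abs, abs_of_pos (by norm_num : (0:ℝ) < 1/2)] at this
  have hnc : ‖c‖ ≤ (1/2 : ℝ) * ‖a + c‖ := by
    have := hym w hwK
    rwa [hres, norm_smul, Real.norm_eq_abs, abs_of_pos (by norm_num : (0:ℝ) < 1/2)] at this
  have htri : ‖a + c‖ ≤ ‖a‖ + ‖c‖ := norm_add_le a c
  have hnorm_eq : ‖a‖ = ‖c‖ := by linarith
  have hadd : ‖a + c‖ = ‖a‖ + ‖c‖ := le_antisymm htri (by linarith)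
  have hac : a = c := eq_of_norm_eq_of_norm_add_eq hnorm_eq hadd
  have : mulVecE A x = mulVecE A y := by
    have : a - c = 0 := sub_eq_zero_of_eq hac
    rw [ha, hc] at this
    unfold res at this
    have h2 : (mulVecE A x - b) - (mulVecE A y - b) = mulVecE A x - mulVecE A y := by abel
    rw [h2] at this
    exact sub_eq_zero.mp this
  exact mulVecE_inj A hA this


lemma ngObj_eq (m : ℕ) (u : ℕ → E n) (k : ℕ) (γ : Fin (m+1) → ℝ) :
    ngObj A b m u k γ =
      ‖res A b (fp A b (u k) + ∑ i : Fin (m+1), γ i • (fp A b (u k) - u (k - (i:ℕ))))‖ := by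
  unfold ngObj
  congr 1
  rw [res_add]
  congr 1
  have : mulVecE A (∑ i : Fin (m+1), γ i • (fp A b (u k) - u (k - (i:ℕ)))) =
      Amap A (∑ i : Fin (m+1), γ i • (fp A b (u k) - u (k - (i:ℕ)))) := rfl
  rw [this, map_sum]
  apply Finset.sum_congr rfl
  intro i _
  rw [_root_.map_smul]
  congr 1
  exact (mulVecE_sub_eq_res_sub A b (fp A b (u k)) (u (k - (i:ℕ)))).symm

lemma diff_mem_span (u : ℕ → E n) (m : ℕ) :
    ∀ c, c ≤ m → ∀ a, a ≤ c →
      u c - u a ∈ Submodule.span ℝ (range fun t : Fin m => u ((t:ℕ)+1) - u (t:ℕ)) := by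
  intro c
  induction c with
  | zero =>
    intro _ a ha
    have : a = 0 := Nat.le_zero.mp ha
    rw [this, sub_self]
    exact Submodule.zero_mem _
  | succ c ih =>
    intro hc a ha
    rcases Nat.lt_or_ge a (c+1) with h | h
    · have : u (c+1) - u a = (u (c+1) - u c) + (u c - u a) := by abel
      rw [this]
      exact Submodule.add_mem _
        (Submodule.subset_span ⟨⟨c, by omega⟩, rfl⟩)
        (ih (by omega) a (by omega))
    · have : a = c + 1 := le_antisymm ha h
      rw [this, sub_self]
      exact Submodule.zero_mem _

lemma span_s_eq (u : ℕ → E n) (m : ℕ) :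
    Submodule.span ℝ (range fun i : Fin (m+1) => fp A b (u m) - u (m - (i:ℕ))) =
      Submodule.span ℝ (range fun t : Fin m => u ((t:ℕ)+1) - u (t:ℕ)) ⊔
        (ℝ ∙ res A b (u m)) := by
  apply le_antisymm
  · rw [Submodule.span_le]
    rintro x ⟨i, rfl⟩
    show fp A b (u m) - u (m - (i:ℕ)) ∈ _
    have hrw : fp A b (u m) - u (m - (i:ℕ)) =
        (u m - u (m - (i:ℕ))) + (-(res A b (u m))) := by
      rw [fp_eq]; abel
    rw [hrw]
    exact Submodule.add_mem _
      (Submodule.mem_sup_left (diff_mem_span u m m le_rfl _ (Nat.sub_le m _)))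
      (Submodule.mem_sup_right (Submodule.neg_mem _ (Submodule.mem_span_singleton_self _)))
  · apply sup_le
    · rw [Submodule.span_le]
      rintro x ⟨t, rfl⟩
      show u ((t:ℕ)+1) - u (t:ℕ) ∈ _
      have h1 : fp A b (u m) - u (m - ((⟨m - (t:ℕ), by omega⟩ : Fin (m+1)):ℕ)) ∈
          Submodule.span ℝ (range fun i : Fin (m+1) => fp A b (u m) - u (m - (i:ℕ))) :=
        Submodule.subset_span ⟨_, rfl⟩
      have h2 : fp A b (u m) - u (m - ((⟨m - (t:ℕ) - 1, by omega⟩ : Fin (m+1)):ℕ)) ∈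
          Submodule.span ℝ (range fun i : Fin (m+1) => fp A b (u m) - u (m - (i:ℕ))) :=
        Submodule.subset_span ⟨_, rfl⟩
      have e1 : m - (m - (t:ℕ)) = (t:ℕ) := by omega
      have e2 : m - (m - (t:ℕ) - 1) = (t:ℕ) + 1 := by
        have := t.isLt; omega
      simp only [e1, e2] at h1 h2
      have hrw : u ((t:ℕ)+1) - u (t:ℕ) =
          (fp A b (u m) - u (t:ℕ)) - (fp A b (u m) - u ((t:ℕ)+1)) := by abel
      rw [hrw]
      exact Submodule.sub_mem _ h1 h2
    · rw [Submodule.span_singleton_le_iff_mem]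
      have h0 : fp A b (u m) - u (m - ((0 : Fin (m+1)):ℕ)) ∈
          Submodule.span ℝ (range fun i : Fin (m+1) => fp A b (u m) - u (m - (i:ℕ))) :=
        Submodule.subset_span ⟨0, rfl⟩
      have e0 : m - ((0 : Fin (m+1)):ℕ) = m := by simp
      rw [e0] at h0
      have hrw : res A b (u m) = -(fp A b (u m) - u m) := by
        rw [fp_eq]; abel
      rw [hrw]
      exact Submodule.neg_mem _ h0


/-- The main induction step: one aNGMRES cycle of `p` iterations starting from a point
agreeing with GMRES reproduces the GMRES iterate `p` steps later. -/
lemma main_step (hA : IsUnit A) (p : ℕ) (hp : 1 ≤ p) (u uG : ℕ → E n)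
    {nu etaG : ℕ}
    (hnu : Module.finrank ℝ (Krylov A (res A b (u 0)) nu) = nu)
    (hG : ∀ k : ℕ, (uG k - u 0) ∈ Krylov A (res A b (u 0)) k ∧
      ∀ w ∈ Krylov A (res A b (u 0)) k, ‖res A b (uG k)‖ ≤ ‖res A b (u 0 + w)‖)
    (hstag : ∀ l : ℕ, 1 ≤ l → l ≤ etaG → uG l - u 0 ∉ Krylov A (res A b (u 0)) (l-1))
    (hu : aNGMRES A b ⊤ p u)
    (m0 : ℕ) (hdvd : p ∣ m0)
    (hu_eq : u m0 = uG m0)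
    (hD_eq : Submodule.span ℝ (range fun t : Fin m0 => u ((t:ℕ)+1) - u (t:ℕ)) =
      Krylov A (res A b (u 0)) m0)
    (hknu : m0 + p ≤ nu) (hketa : m0 + p ≤ etaG) :
    u (m0+p) = uG (m0+p) ∧
    Submodule.span ℝ (range fun t : Fin (m0+p) => u ((t:ℕ)+1) - u (t:ℕ)) =
      Krylov A (res A b (u 0)) (m0+p) := by
  set r0 := res A b (u 0) with hr0def
  have hr0ne : r0 ≠ 0 := by
    intro h0
    have h1nu : 1 ≤ nu := by omega
    have hfr : Module.finrank ℝ (Krylov A r0 1) = 1 := finrank_Krylov hnu h1nu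
    have hbot : Krylov A r0 1 ≤ ⊥ := by
      rw [show Krylov A r0 1 =
          Submodule.span ℝ (Set.range fun i : Fin 1 => mulVecE (A ^ (i:ℕ)) r0) from rfl,
        Submodule.span_le]
      rintro x ⟨i, rfl⟩
      have hi : (i:ℕ) = 0 := by omega
      show mulVecE (A ^ (i:ℕ)) r0 ∈ (⊥ : Submodule ℝ (E n))
      rw [hi, pow_zero, mulVecE_one, h0]
      exact Submodule.zero_mem _
    have hb := Submodule.finrank_mono (R := ℝ) hbot
    rw [hfr, finrank_bot] at hb
    omega
  have hndvd : ∀ l, m0 < l → l < m0 + p → ¬ p ∣ l := by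
    intro l hl1 hl2 hdl
    obtain ⟨a, ha⟩ := hdvd
    obtain ⟨c, hc⟩ := hdl
    subst ha; subst hc
    have h1 : a < c := lt_of_mul_lt_mul_left (by omega) (Nat.zero_le p)
    have h2 : c < a + 1 := lt_of_mul_lt_mul_left (by
      calc p * c < p * a + p := hl2
        _ = p * (a+1) := by ring) (Nat.zero_le p)
    omega
  -- Inner induction along the Richardson sweep.
  have hQ : ∀ d : ℕ, d + 1 ≤ p →
      (Submodule.span ℝ (range fun t : Fin (m0+d) => u ((t:ℕ)+1) - u (t:ℕ)) =
          Krylov A r0 (m0+d) ∧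
        u (m0+d) - u 0 ∈ Krylov A r0 (m0+d) ∧
        res A b (u (m0+d)) ∈ Krylov A r0 (m0+d+1) ∧
        res A b (u (m0+d)) ∉ Krylov A r0 (m0+d)) := by
    intro d
    induction d with
    | zero =>
      intro _
      simp only [Nat.add_zero]
      refine ⟨hD_eq, ?_, ?_⟩
      · rw [hu_eq]; exact (hG m0).1
      · rcases Nat.eq_zero_or_pos m0 with h0 | hpos
        · subst h0
          constructor
          · rw [← hr0def]
            exact self_mem_Krylov A r0 (by omega)
          · rw [← hr0def, Krylov_zero]
            intro hmem
            exact hr0ne (Submodule.mem_bot ℝ |>.mp hmem)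
        · obtain ⟨t, ht⟩ : ∃ t, m0 = t + 1 := ⟨m0 - 1, by omega⟩
          have hw_in : u m0 - u 0 ∈ Krylov A r0 m0 := by rw [hu_eq]; exact (hG m0).1
          have hw_out : u m0 - u 0 ∉ Krylov A r0 t := by
            rw [hu_eq]
            have := hstag m0 (by omega) (by omega)
            rwa [show m0 - 1 = t by omega] at this
          have hw_in' : u m0 - u 0 ∈ Krylov A r0 (t+1) := by rwa [← ht]
          have hstep := step_lemma hnu (show t + 2 ≤ nu by omega) hw_in' hw_out
          have hres0 : res A b (u m0) = mulVecE A (u m0 - u 0) + r0 :=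
            res_eq A b (u 0) (u m0)
          constructor
          · rw [hres0]
            refine Submodule.add_mem _ ?_ (self_mem_Krylov A r0 (by omega))
            rw [show m0 + 1 = t + 2 by omega]
            exact hstep.1
          · intro hmem
            apply hstep.2
            have hAw : mulVecE A (u m0 - u 0) = res A b (u m0) - r0 := by
              rw [hres0]; abel
            rw [show t + 1 = m0 by omega, hAw]
            exact Submodule.sub_mem _ hmem (self_mem_Krylov A r0 (by omega))
    | succ d ihd =>
      intro hd1
      obtain ⟨hD, hu0, hrin, hrout⟩ := ihd (by omega)
      set l := m0 + d with hldef
      rw [show m0 + (d+1) = l + 1 by omega]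
      have hfix : u (l+1) = fp A b (u l) := by
        have h := (hu (l+1) (by omega)).1 (hndvd (l+1) (by omega) (by omega))
        simpa using h
      have hstep := step_lemma hnu (show l + 2 ≤ nu by omega) hrin hrout
      refine ⟨?_, ?_, ?_, ?_⟩
      · refine Eq.trans (span_range_fin_succ (fun t => u (t+1) - u t)) ?_
        rw [hD]
        have hdiff : u (l+1) - u l = -(res A b (u l)) := by rw [hfix, fp_eq]; abel
        rw [hdiff, span_singleton_neg']
        exact Krylov_sup_singleton hnu (by omega) hrin hrout
      · have h1 : u (l+1) - u 0 = (u l - u 0) - res A b (u l) := by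
          rw [hfix, fp_eq]; abel
        rw [h1]
        exact Submodule.sub_mem _ (Krylov_mono A r0 (Nat.le_succ l) hu0) hrin
      · have hres1 : res A b (u (l+1)) = res A b (u l) - mulVecE A (res A b (u l)) := by
          rw [hfix, fp_eq, res_sub]
        rw [hres1]
        exact Submodule.sub_mem _ (Krylov_mono A r0 (by omega) hrin) hstep.1
      · have hres1 : res A b (u (l+1)) = res A b (u l) - mulVecE A (res A b (u l)) := by
          rw [hfix, fp_eq, res_sub]
        rw [hres1]
        intro hmem
        apply hstep.2
        have h2 : mulVecE A (res A b (u l)) =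
            res A b (u l) - (res A b (u l) - mulVecE A (res A b (u l))) := by abel
        rw [h2]
        exact Submodule.sub_mem _ hrin hmem
  obtain ⟨hD, hu0, hrin, hrout⟩ := hQ (p-1) (by omega)
  set m := m0 + (p - 1) with hmdef
  have hmk : m + 1 = m0 + p := by omega
  rw [hmk] at hrin
  have hpk : p ∣ (m0 + p) := Nat.dvd_add hdvd dvd_rfl
  have hstep := (hu (m0+p) (by omega)).2 hpk
  have hmin' : (min (⊤:ℕ∞) (((m0+p : ℕ):ℕ∞)-1)).toNat = m := by
    rw [min_eq_right le_top, ← Nat.cast_one, ← ENat.coe_sub, ENat.toNat_coe]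
    omega
  rw [hmin'] at hstep
  rw [show m0 + p - 1 = m by omega] at hstep
  obtain ⟨β, hβmin, hβeq⟩ := hstep
  have hspan : Submodule.span ℝ
      (range fun i : Fin (m+1) => fp A b (u m) - u (m - (i:ℕ))) = Krylov A r0 (m0+p) := by
    rw [span_s_eq A b u m, hD, ← hmk]
    rw [← hmk] at hrin
    exact Krylov_sup_singleton hnu (by omega) hrin hrout
  have hfpmem : fp A b (u m) - u 0 ∈ Krylov A r0 (m0+p) := by
    have h1 : fp A b (u m) - u 0 = (u m - u 0) - res A b (u m) := by rw [fp_eq]; abel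
    rw [h1]
    exact Submodule.sub_mem _ (Krylov_mono A r0 (by omega) hu0) hrin
  have hukmem : u (m0+p) - u 0 ∈ Krylov A r0 (m0+p) := by
    rw [hβeq]
    have h1 : fp A b (u m) + (∑ i : Fin (m+1), β i • (fp A b (u m) - u (m - (i:ℕ)))) - u 0
        = (fp A b (u m) - u 0) + ∑ i : Fin (m+1), β i • (fp A b (u m) - u (m - (i:ℕ))) := by
      abel
    rw [h1]
    refine Submodule.add_mem _ hfpmem ?_
    rw [← hspan]
    exact Submodule.sum_mem _
      (fun i _ => Submodule.smul_mem _ _ (Submodule.subset_span ⟨i, rfl⟩))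
  have hukmin : ∀ w ∈ Krylov A r0 (m0+p), ‖res A b (u (m0+p))‖ ≤ ‖res A b (u 0 + w)‖ := by
    intro w hw
    have hw' : w - (fp A b (u m) - u 0) ∈ Submodule.span ℝ
        (range fun i : Fin (m+1) => fp A b (u m) - u (m - (i:ℕ))) := by
      rw [hspan]
      exact Submodule.sub_mem _ hw hfpmem
    obtain ⟨γ, hγ⟩ := (Submodule.mem_span_range_iff_exists_fun ℝ).mp hw'
    have hpt : fp A b (u m) + ∑ i : Fin (m+1), γ i • (fp A b (u m) - u (m - (i:ℕ)))
        = u 0 + w := by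
      rw [hγ]; abel
    calc ‖res A b (u (m0+p))‖ = ngObj A b m u m β := by
          rw [ngObj_eq A b m u m β, ← hβeq]
      _ ≤ ngObj A b m u m γ := hβmin γ
      _ = ‖res A b (u 0 + w)‖ := by rw [ngObj_eq A b m u m γ, hpt]
  have hkeq : u (m0+p) = uG (m0+p) :=
    min_unique A b hA (u 0) (Krylov A r0 (m0+p)) hukmem (hG (m0+p)).1 hukmin (hG (m0+p)).2
  refine ⟨hkeq, ?_⟩
  rw [← hmk]
  refine Eq.trans (span_range_fin_succ (fun t => u (t+1) - u t)) ?_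
  rw [hD]
  apply Krylov_sup_singleton hnu (by omega)
  · have h1 : u (m+1) - u m = (u (m+1) - u 0) - (u m - u 0) := by abel
    rw [h1]
    refine Submodule.sub_mem _ ?_ (Krylov_mono A r0 (Nat.le_succ m) hu0)
    rw [hmk]
    exact hukmem
  · intro hmem
    have h1 : u (m+1) - u 0 = (u (m+1) - u m) + (u m - u 0) := by abel
    have h2 : uG (m0+p) - u 0 ∈ Krylov A r0 (m0+p-1) := by
      rw [show m0 + p - 1 = m by omega, ← hkeq, ← hmk, h1]
      exact Submodule.add_mem _ hmem hu0
    exact (hstag (m0+p) (by omega) hketa) h2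

end StmtAux


open StmtAux in
/-- aNGMRES(∞, p) and full GMRES coincide at iteration indices jp,
for j = 1, …, j*, whenever j*p ≤ ν(A, r₀) and j*p ≤ η^G. -/
theorem stmt_11 {n p : ℕ} (hp : 1 ≤ p) (A : Matrix (Fin n) (Fin n) ℝ) (hA : IsUnit A)
    (b : EuclideanSpace ℝ (Fin n)) (u uG : ℕ → EuclideanSpace ℝ (Fin n))
    (hu : aNGMRES A b ⊤ p u) (hG0 : uG 0 = u 0)
    (hG : ∀ k : ℕ, (uG k - u 0) ∈ Krylov A (res A b (u 0)) k ∧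
      ∀ w ∈ Krylov A (res A b (u 0)) k, ‖res A b (uG k)‖ ≤ ‖res A b (u 0 + w)‖)
    (ν ηG jstar : ℕ)
    (hν : IsGreatest {ℓ : ℕ | Module.finrank ℝ (Krylov A (res A b (u 0)) ℓ) = ℓ} ν)
    (hη : IsLeast {ℓ : ℕ | uG ℓ = uG (ℓ+1)} ηG)
    (h1 : jstar * p ≤ ν) (h2 : jstar * p ≤ ηG) :
    ∀ j : ℕ, 1 ≤ j → j ≤ jstar → u (j * p) = uG (j * p) := by
  have hnu : Module.finrank ℝ (Krylov A (res A b (u 0)) ν) = ν := hν.1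
  have hstag : ∀ l : ℕ, 1 ≤ l → l ≤ ηG →
      uG l - u 0 ∉ Krylov A (res A b (u 0)) (l-1) := by
    intro l hl1 hl2 hmem
    have heq : uG l = uG (l-1) :=
      StmtAux.min_unique A b hA (u 0) (Krylov A (res A b (u 0)) (l-1)) hmem (hG (l-1)).1
        (fun w hw => (hG l).2 w (StmtAux.Krylov_mono A (res A b (u 0)) (Nat.sub_le l 1) hw))
        (fun w hw => (hG (l-1)).2 w hw)
    have hmem2 : (l-1) ∈ {ℓ : ℕ | uG ℓ = uG (ℓ+1)} := by
      show uG (l-1) = uG (l-1+1)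
      rw [Nat.sub_add_cancel hl1]
      exact heq.symm
    have := hη.2 hmem2
    omega
  have key : ∀ j : ℕ, j ≤ jstar → u (j*p) = uG (j*p) ∧
      Submodule.span ℝ (range fun t : Fin (j*p) => u ((t:ℕ)+1) - u (t:ℕ)) =
        Krylov A (res A b (u 0)) (j*p) := by
    intro j
    induction j with
    | zero =>
      intro _
      rw [Nat.zero_mul]
      refine ⟨hG0.symm, ?_⟩
      rw [Set.range_eq_empty, Submodule.span_empty, StmtAux.Krylov_zero]
    | succ j ih =>
      intro hj1
      obtain ⟨hu_eq, hD_eq⟩ := ih (by omega)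
      have hkm0 : (j+1)*p = j*p + p := Nat.succ_mul j p
      have hknu : j*p + p ≤ ν := by
        rw [← hkm0]
        exact le_trans (Nat.mul_le_mul_right p hj1) h1
      have hketa : j*p + p ≤ ηG := by
        rw [← hkm0]
        exact le_trans (Nat.mul_le_mul_right p hj1) h2
      have := StmtAux.main_step A b hA p hp u uG hnu hG hstag hu (j*p)
        (dvd_mul_left p j) hu_eq hD_eq hknu hketa
      rw [hkm0]
      exact this
  intro j hj1 hj2
  exact (key j hj2).1

end
end
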